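/- arXiv:1412.2180 — 4 statements merged into one kernel-verified Lean document; each statement's English description precedes it below -/
import Mathlib

section
/- Let < and ≺ be total orders on 𝒜ₙ that are both barred-tight, let T (a colored tableau with respect to <) and T′ (a colored tableau with respect to ≺) be related by a single conversion switch, and let α be their common unbarred content. Then the word v(T) is an α-ballot sequence if and only if v(T′) is an α-ballot sequence. -/
open scoped Classical

/-- A letter of the alphabet 𝒜ₙ: `(false, i)` is the unbarred letter `i+1`,
`(true, i)` is the barred letter `i+1` with a bar. -/
abbrev Letter (n : ℕ) := Bool × Fin n

/-- A filling assigns an optional letter to each box of the plane; boxes outside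
the underlying shape carry `none`. -/
abbrev Filling (n : ℕ) := ℕ × ℕ → Option (Letter n)

/-- `r` is a total (linear) order on `Letter n` extending the partial order of 𝒜ₙ,
in which the unbarred letters form a chain, the barred letters form a chain, and
barred and unbarred letters are incomparable. -/
def IsLinExt {n : ℕ} (r : Letter n → Letter n → Prop) : Prop :=
  IsLinearOrder (Letter n) r ∧ ∀ (b : Bool) (i j : Fin n), i ≤ j → r (b, i) (b, j)

/-- `T` is a semistandard colored tableau of shape `sh` with respect to the total order `r`:
rows and columns weakly increase with respect to `r`, no two identical unbarred letters
share a column, and no two identical barred letters share a row. -/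
def IsColoredTableau {n : ℕ} (r : Letter n → Letter n → Prop) (sh : YoungDiagram)
    (T : Filling n) : Prop :=
  (∀ c, (T c).isSome ↔ c ∈ sh) ∧
  (∀ i j₁ j₂ : ℕ, ∀ x y : Letter n, j₁ ≤ j₂ → T (i, j₁) = some x → T (i, j₂) = some y → r x y) ∧
  (∀ i₁ i₂ j : ℕ, ∀ x y : Letter n, i₁ ≤ i₂ → T (i₁, j) = some x → T (i₂, j) = some y → r x y) ∧
  (∀ i₁ i₂ j : ℕ, ∀ a : Fin n, i₁ ≠ i₂ → T (i₁, j) = some (false, a) →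
    T (i₂, j) ≠ some (false, a)) ∧
  (∀ i j₁ j₂ : ℕ, ∀ b : Fin n, j₁ ≠ j₂ → T (i, j₁) = some (true, b) →
    T (i, j₂) ≠ some (true, b))

/-- The unbarred reverse (row) reading word: unbarred entries, rows right to left,
rows top to bottom, skipping barred entries. -/
def uWord {n : ℕ} (sh : YoungDiagram) (T : Filling n) : List (Fin n) :=
  (List.range (sh.colLen 0)).flatMap fun i =>
    (List.range (sh.rowLen i)).reverse.filterMap fun j =>
      match T (i, j) with
      | some (false, a) => some a
      | _ => none

/-- The barred (column) reading word with bars removed: barred entries, columns bottom to top,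
columns left to right, skipping unbarred entries. -/
def vWord {n : ℕ} (sh : YoungDiagram) (T : Filling n) : List (Fin n) :=
  (List.range (sh.rowLen 0)).flatMap fun j =>
    (List.range (sh.colLen j)).reverse.filterMap fun i =>
      match T (i, j) with
      | some (true, b) => some b
      | _ => none

/-- The total reverse (row-column) reading word `w(T) = u(T)v(T)`. -/
def wWord {n : ℕ} (sh : YoungDiagram) (T : Filling n) : List (Fin n) :=
  uWord sh T ++ vWord sh T

/-- A word over `{1, …, n}` (encoded with `Fin n`, where `⟨i, _⟩` stands for the letter `i+1`)
is a ballot sequence if every prefix contains at least as many `i`'s as `i+1`'s. -/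
def IsBallot {n : ℕ} (w : List (Fin n)) : Prop :=
  ∀ p : List (Fin n), p <+: w → ∀ i : ℕ, ∀ h : i + 1 < n,
    p.count ⟨i + 1, h⟩ ≤ p.count ⟨i, Nat.lt_of_succ_lt h⟩

/-- A word over `{1, …, n}` is an `α`-ballot sequence if in every prefix the number of
`i+1`'s minus the number of `i`'s is at most `αᵢ − α_{i+1}`. -/
def IsAlphaBallot {n : ℕ} (α : Fin n → ℕ) (w : List (Fin n)) : Prop :=
  ∀ p : List (Fin n), p <+: w → ∀ i : ℕ, ∀ h : i + 1 < n,
    p.count ⟨i + 1, h⟩ + α ⟨i + 1, h⟩ ≤ p.count ⟨i, Nat.lt_of_succ_lt h⟩ + α ⟨i, Nat.lt_of_succ_lt h⟩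

/-- `y` covers `x` in the order `r`: they are adjacent (consecutive) with `x` below `y`. -/
def CoveredBy {n : ℕ} (r : Letter n → Letter n → Prop) (x y : Letter n) : Prop :=
  r x y ∧ x ≠ y ∧ ∀ z, r x z → r z y → z = x ∨ z = y

/-- `x` and `y` are adjacent (consecutive) in the order `r`, in either relative order. -/
def AdjacentIn {n : ℕ} (r : Letter n → Letter n → Prop) (x y : Letter n) : Prop :=
  CoveredBy r x y ∨ CoveredBy r y x

/-- `z` lies strictly between `x` and `y` in the order `r`. -/
def Between {n : ℕ} (r : Letter n → Letter n → Prop) (x y z : Letter n) : Prop :=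
  r x z ∧ r z y ∧ z ≠ x ∧ z ≠ y

/-- The order `r` is unbarred-tight: at most one barred letter occurs between any two
consecutive unbarred letters. -/
def UnbarredTight {n : ℕ} (r : Letter n → Letter n → Prop) : Prop :=
  ∀ i : ℕ, ∀ h : i + 1 < n, ∀ b₁ b₂ : Fin n,
    Between r (false, ⟨i, Nat.lt_of_succ_lt h⟩) (false, ⟨i + 1, h⟩) (true, b₁) →
    Between r (false, ⟨i, Nat.lt_of_succ_lt h⟩) (false, ⟨i + 1, h⟩) (true, b₂) → b₁ = b₂

/-- The order `r` is barred-tight: at most one unbarred letter occurs between any two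
consecutive barred letters. -/
def BarredTight {n : ℕ} (r : Letter n → Letter n → Prop) : Prop :=
  ∀ i : ℕ, ∀ h : i + 1 < n, ∀ a₁ a₂ : Fin n,
    Between r (true, ⟨i, Nat.lt_of_succ_lt h⟩) (true, ⟨i + 1, h⟩) (false, a₁) →
    Between r (true, ⟨i, Nat.lt_of_succ_lt h⟩) (true, ⟨i + 1, h⟩) (false, a₂) → a₁ = a₂

/-- Two boxes share an edge. -/
def BoxAdj (c d : ℕ × ℕ) : Prop :=
  (c.1 = d.1 ∧ (c.2 + 1 = d.2 ∨ d.2 + 1 = c.2)) ∨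
  (c.2 = d.2 ∧ (c.1 + 1 = d.1 ∨ d.1 + 1 = c.1))

/-- `c` and `d` are joined by a chain of boxes of `S`, each sharing an edge with the next. -/
def ConnIn (S : Set (ℕ × ℕ)) (c d : ℕ × ℕ) : Prop :=
  Relation.ReflTransGen (fun u v => u ∈ S ∧ v ∈ S ∧ BoxAdj u v) c d

/-- The orders `r` and `r'` agree except that the unbarred letter `a` and the barred letter `b̄`
are adjacent in both, with `a` immediately below `b̄` in `r` and `b̄` immediately below `a`
in `r'`. -/
def OrderSwitch {n : ℕ} (r r' : Letter n → Letter n → Prop) (a b : Fin n) : Prop :=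
  CoveredBy r (false, a) (true, b) ∧ CoveredBy r' (true, b) (false, a) ∧
  ∀ x y : Letter n, ¬(x = (false, a) ∧ y = (true, b)) → ¬(x = (true, b) ∧ y = (false, a)) →
    (r x y ↔ r' x y)

/-- The fillings `T` and `T'` are related by a conversion switch at the letters `a`, `b̄`:
they agree on all boxes not containing `a` or `b̄`, the set `S` of boxes containing `a` or `b̄`
is the same in both, and in each edge-connected component of `S` they contain the same number
of `a`'s. -/
def TableauSwitch {n : ℕ} (a b : Fin n) (T T' : Filling n) : Prop :=
  (∀ c, c ∉ {c | T c = some (false, a) ∨ T c = some (true, b)} → T' c = T c) ∧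
  (∀ c, c ∈ {c | T c = some (false, a) ∨ T c = some (true, b)} ↔
    (T' c = some (false, a) ∨ T' c = some (true, b))) ∧
  (∀ c, T c = some (false, a) ∨ T c = some (true, b) →
    {d | ConnIn {e | T e = some (false, a) ∨ T e = some (true, b)} c d ∧
      T d = some (false, a)}.ncard =
    {d | ConnIn {e | T e = some (false, a) ∨ T e = some (true, b)} c d ∧
      T' d = some (false, a)}.ncard)

/-- One step of conversion between pairs (total order, colored tableau of shape `sh`):
a single conversion switch, in either direction, through valid total orders and
colored tableaux. -/
def ConvStep {n : ℕ} (sh : YoungDiagram)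
    (p q : ((Letter n → Letter n → Prop) × Filling n)) : Prop :=
  IsLinExt p.1 ∧ IsLinExt q.1 ∧ IsColoredTableau p.1 sh p.2 ∧ IsColoredTableau q.1 sh q.2 ∧
  ∃ a b : Fin n, (OrderSwitch p.1 q.1 a b ∧ TableauSwitch a b p.2 q.2) ∨
    (OrderSwitch q.1 p.1 a b ∧ TableauSwitch a b q.2 p.2)

/-- `T` (w.r.t. `p.1`) and `T'` (w.r.t. `q.1`) correspond under conversion: they are connected
by a finite sequence of conversion switches through intermediate total orders and colored
tableaux. -/
def ConvertsTo {n : ℕ} (sh : YoungDiagram)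
    (p q : ((Letter n → Letter n → Prop) × Filling n)) : Prop :=
  Relation.ReflTransGen (ConvStep sh) p q

/-- The unbarred content of a filling: `α i` is the number of unbarred letters `i` in it. -/
def unbarredContent {n : ℕ} (sh : YoungDiagram) (T : Filling n) (i : Fin n) : ℕ :=
  (sh.cells.filter fun c => T c = some (false, i)).card

/-- The total content of a filling: the number of occurrences of `i` and `ī` together. -/
def totalContent {n : ℕ} (sh : YoungDiagram) (T : Filling n) (i : Fin n) : ℕ :=
  (sh.cells.filter fun c => T c = some (false, i) ∨ T c = some (true, i)).card

/-- The total color of a filling: the number of barred letters in it. -/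
def totalColor {n : ℕ} (sh : YoungDiagram) (T : Filling n) : ℕ :=
  (sh.cells.filter fun c => (T c).map Prod.fst = some true).card

/-- The natural order `1̄ < 1 < 2̄ < 2 < ⋯ < n̄ < n` on 𝒜ₙ. -/
def natOrd (n : ℕ) : Letter n → Letter n → Prop :=
  fun x y => x.2 < y.2 ∨ (x.2 = y.2 ∧ (x.1 = true ∨ y.1 = false))

/-- The small bar order `1̄ ≺ 2̄ ≺ ⋯ ≺ n̄ ≺ 1 ≺ 2 ≺ ⋯ ≺ n` on 𝒜ₙ. -/
def smallBarOrd (n : ℕ) : Letter n → Letter n → Prop :=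
  fun x y => (x.1 = true ∧ y.1 = false) ∨ (x.1 = y.1 ∧ x.2 ≤ y.2)

/-- `f` is a semistandard skew tableau of shape `outer / inner` with entries in `{1, …, n}`:
rows weakly increase, columns strictly increase. -/
def IsSkewSSYT {n : ℕ} (outer inner : YoungDiagram) (f : ℕ × ℕ → Option (Fin n)) : Prop :=
  (∀ c, (f c).isSome ↔ (c ∈ outer ∧ c ∉ inner)) ∧
  (∀ i j₁ j₂ : ℕ, ∀ x y : Fin n, j₁ ≤ j₂ → f (i, j₁) = some x → f (i, j₂) = some y → x ≤ y) ∧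
  (∀ i₁ i₂ j : ℕ, ∀ x y : Fin n, i₁ < i₂ → f (i₁, j) = some x → f (i₂, j) = some y → x < y)

/-- The reverse row reading word of a (skew) tableau supported inside the rows of `sh`:
entries along rows right to left, rows top to bottom. -/
def revRowWord {n : ℕ} (sh : YoungDiagram) (f : ℕ × ℕ → Option (Fin n)) : List (Fin n) :=
  (List.range (sh.colLen 0)).flatMap fun i =>
    (List.range (sh.rowLen i)).reverse.filterMap fun j => f (i, j)
namespace ConvAux

variable {n : ℕ}

/-! ### Generic list lemmas -/

theorem prefix_split {α} {A B p : List α} (h : p <+: A ++ B) :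
    p <+: A ∨ ∃ q, p = A ++ q ∧ q <+: B := by
  obtain ⟨t, ht⟩ := h
  rcases List.append_eq_append_iff.1 ht with ⟨a', ha, _⟩ | ⟨c', hc, hd⟩
  · exact Or.inl ⟨a', ha.symm⟩
  · exact Or.inr ⟨c', hc, ⟨t, hd.symm⟩⟩

theorem prefix_flatMap {α β} (g : α → List β) :
    ∀ (l : List α) (p : List β), p <+: l.flatMap g →
      ∃ l₁ l₂, l = l₁ ++ l₂ ∧ ∃ q, p = l₁.flatMap g ++ q ∧
        (q = [] ∨ ∃ c l₂', l₂ = c :: l₂' ∧ q <+: g c) := by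
  intro l
  induction l with
  | nil =>
    intro p hp
    have : p = [] := by simpa using List.eq_nil_of_prefix_nil (by simpa using hp)
    exact ⟨[], [], rfl, [], by simp [this], Or.inl rfl⟩
  | cons c l ih =>
    intro p hp
    rw [List.flatMap_cons] at hp
    rcases prefix_split hp with h | ⟨q, hq, hq'⟩
    · exact ⟨[], c :: l, rfl, p, by simpa using rfl, Or.inr ⟨c, l, rfl, h⟩⟩
    · obtain ⟨l₁, l₂, hl, q', hq'', hlast⟩ := ih q hq'
      exact ⟨c :: l₁, l₂, by simp [hl], q', by simp [hq, hq''], hlast⟩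

theorem count_filterMap' {α β} [DecidableEq β] (f : α → Option β) (l : List α) (x : β) :
    (l.filterMap f).count x = l.countP (fun a => f a == some x) := by
  induction l with
  | nil => rfl
  | cons a l ih =>
    rw [List.filterMap_cons, List.countP_cons]
    cases h : f a with
    | none => simp [h, ih]
    | some y =>
      by_cases hy : y = x
      · subst hy; simp [h, ih, List.count_cons]
      · simp [h, ih, List.count_cons, hy]

/-- In a weakly decreasing list, elements of the `dropWhile (i < ·)` part are `≤ i`. -/
theorem dropWhile_le {l : List (Fin n)} (hs : l.Pairwise (fun x y : Fin n => y.val ≤ x.val))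
    (i : ℕ) : ∀ x ∈ l.dropWhile (fun y => decide (i < y.val)), x.val ≤ i := by
  induction l with
  | nil => simp
  | cons a l ih =>
    rw [List.dropWhile_cons]
    by_cases h : i < a.val
    · simp only [h, decide_true, if_true]
      exact ih hs.tail
    · simp only [h, decide_false, if_false]
      intro x hx
      rcases hx with _ | hx
      · omega
      · next hx => exact le_trans (List.rel_of_pairwise_cons hs hx) (by omega)

theorem pairwise_filterMap' {α β} (f : α → Option β) {R : β → β → Prop} {S : α → α → Prop}
    {l : List α} (hl : l.Pairwise S)
    (h : ∀ a b, S a b → ∀ x, f a = some x → ∀ y, f b = some y → R x y) :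
    (l.filterMap f).Pairwise R := by
  induction l with
  | nil => simp
  | cons a l ih =>
    rw [List.filterMap_cons]
    cases hfa : f a with
    | none => exact ih hl.tail
    | some x =>
      refine List.Pairwise.cons ?_ (ih hl.tail)
      intro y hy
      obtain ⟨b, hb, hfb⟩ := List.mem_filterMap.1 hy
      exact h a b (List.rel_of_pairwise_cons hl hb) x hfa y hfb

end ConvAux

section Main

variable {n : ℕ} {r r' : Letter n → Letter n → Prop} {sh : YoungDiagram}
  {T T' : Filling n} {a b : Fin n}

/-! ### Order utilities -/

theorem linrefl (hr : IsLinExt r) (x : Letter n) : r x x := hr.1.1.1.1.refl x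

theorem lintrans (hr : IsLinExt r) {x y z : Letter n} (h1 : r x y) (h2 : r y z) : r x z :=
  hr.1.1.1.2.trans x y z h1 h2

theorem linantisymm (hr : IsLinExt r) {x y : Letter n} (h1 : r x y) (h2 : r y x) : x = y :=
  hr.1.1.2.antisymm x y h1 h2

theorem lintotal (hr : IsLinExt r) (x y : Letter n) : r x y ∨ r y x :=
  hr.1.2.total x y

theorem linmono (hr : IsLinExt r) {f : Bool} {i j : Fin n} (h : i ≤ j) : r (f, i) (f, j) :=
  hr.2 f i j h

theorem linmono_iff (hr : IsLinExt r) {f : Bool} {i j : Fin n} : r (f, i) (f, j) ↔ i ≤ j := by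
  constructor
  · intro h
    by_contra hij
    push_neg at hij
    have h2 := linantisymm hr h (linmono hr hij.le)
    have : i = j := by
      have := congrArg Prod.snd h2; simpa using this
    omega
  · exact linmono hr

/-- letters: La = unbarred a, Lb = barred b -/
local notation "La" => ((false, a) : Letter n)
local notation "Lb" => ((true, b) : Letter n)

theorem rab (hsw : OrderSwitch r r' a b) : r La Lb := hsw.1.1

theorem cover_ab (hsw : OrderSwitch r r' a b) {z : Letter n} (h1 : r La z) (h2 : r z Lb) :
    z = La ∨ z = Lb := hsw.1.2.2 z h1 h2

theorem r'ba (hsw : OrderSwitch r r' a b) : r' Lb La := hsw.2.1.1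

theorem transfer (hsw : OrderSwitch r r' a b) {x y : Letter n}
    (h1 : ¬(x = La ∧ y = Lb)) (h2 : ¬(x = Lb ∧ y = La)) : (r x y ↔ r' x y) := hsw.2.2 x y h1 h2

/-- In `r`, `b̄-1 < a` (when `b ≥ 1`). -/
theorem r_bm_a (hr : IsLinExt r) (hsw : OrderSwitch r r' a b) (hb : 0 < b.val) :
    r (true, ⟨b.val - 1, by omega⟩) La := by
  rcases lintotal hr La (true, ⟨b.val - 1, by omega⟩) with h | h
  · have h2 : r ((true, ⟨b.val - 1, by omega⟩) : Letter n) Lb :=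
      linmono hr (by rw [Fin.le_def]; exact Nat.sub_le _ _)
    rcases cover_ab hsw h h2 with h' | h'
    · exact absurd (congrArg Prod.fst h') (by simp)
    · have := congrArg (fun x : Letter n => x.2.val) h'
      simp at this; omega
  · exact h

/-- gap lemma: anything unbarred strictly between `b̄-1` and `b̄` in `r` equals `a`. -/
theorem gap_bm (hr : IsLinExt r) (hbt : BarredTight r) (hsw : OrderSwitch r r' a b)
    (hb : 0 < b.val) {c : Fin n}
    (h1 : r (true, ⟨b.val - 1, by omega⟩) (false, c)) (h2 : r (false, c) Lb) : c = a := by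
  have hbn : (b.val - 1) + 1 < n := by omega
  have hbb : (⟨(b.val - 1) + 1, hbn⟩ : Fin n) = b := by rw [Fin.ext_iff]; simp; omega
  have hkey : ∀ d : Fin n, r (true, ⟨b.val - 1, by omega⟩) (false, d) → r (false, d) Lb →
      Between r (true, ⟨b.val - 1, by omega⟩) (true, ⟨(b.val - 1) + 1, hbn⟩) (false, d) := by
    intro d hd1 hd2
    exact ⟨hd1, by rw [hbb]; exact hd2, by simp, by simp⟩
  exact hbt (b.val - 1) hbn c a (hkey c h1 h2) (hkey a (r_bm_a hr hsw hb) (rab hsw))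

/-- gap lemma: anything unbarred strictly between `b̄` and `b̄+1` in `r` equals `a`. -/
theorem gap_bp (hr : IsLinExt r) (hr' : IsLinExt r') (hbt' : BarredTight r')
    (hsw : OrderSwitch r r' a b) (hb : b.val + 1 < n) {c : Fin n}
    (h1 : r Lb (false, c)) (h2 : r (false, c) (true, ⟨b.val + 1, hb⟩)) : c = a := by
  by_cases hca : c = a
  · exact hca
  have hbp_ne : ((true, (⟨b.val + 1, hb⟩ : Fin n)) : Letter n) ≠ Lb := by
    intro h
    have := congrArg (fun x : Letter n => x.2.val) h
    simp at this
  have hc_ne_a : ((false, c) : Letter n) ≠ La := by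
    intro h
    exact hca (congrArg Prod.snd h)
  have t1 : r' Lb (false, c) := by
    rw [← transfer hsw (fun h => by exact absurd (congrArg Prod.fst h.1) (by simp))
      (fun h => hc_ne_a h.2)]
    exact h1
  have t2 : r' (false, c) (true, ⟨b.val + 1, hb⟩) := by
    rw [← transfer hsw (fun h => hbp_ne h.2) (fun h => by exact absurd (congrArg Prod.fst h.1) (by simp))]
    exact h2
  have ta2 : r' La (true, ⟨b.val + 1, hb⟩) := by
    rw [← transfer hsw (fun h => hbp_ne h.2) (fun h => by exact absurd (congrArg Prod.fst h.1) (by simp))]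
    exact lintrans hr (rab hsw) (linmono hr (by rw [Fin.le_def]; simp))
  have hbb : (⟨b.val, by omega⟩ : Fin n) = b := by simp
  have h3 := hbt' b.val hb c a ⟨by rw [hbb]; exact t1, t2, by simp, by simp⟩
    ⟨by rw [hbb]; exact r'ba hsw, ta2, by simp, by simp⟩
  exact absurd h3 hca

/-- classification: `b̄-1 ≤ x ≤ b̄` in `r` implies `x ∈ {b̄-1, a, b̄}`. -/
theorem cls_bm (hr : IsLinExt r) (hbt : BarredTight r) (hsw : OrderSwitch r r' a b)
    (hb : 0 < b.val) {x : Letter n}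
    (h1 : r (true, ⟨b.val - 1, by omega⟩) x) (h2 : r x Lb) :
    x = (true, (⟨b.val - 1, by omega⟩ : Fin n)) ∨ x = La ∨ x = Lb := by
  obtain ⟨f, v⟩ := x
  cases f
  · exact Or.inr (Or.inl (by rw [gap_bm hr hbt hsw hb h1 h2]))
  · have hv1 : b.val - 1 ≤ v.val := by
      have := (linmono_iff hr).1 h1; rw [Fin.le_def] at this; simpa using this
    have hv2 : v.val ≤ b.val := by
      have := (linmono_iff hr).1 h2; rw [Fin.le_def] at this; simpa using this
    rcases Nat.eq_or_lt_of_le hv2 with h | h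
    · exact Or.inr (Or.inr (by rw [show v = b from Fin.ext h]))
    · exact Or.inl (by rw [show v = (⟨b.val - 1, by omega⟩ : Fin n) from Fin.ext (by simp; omega)])

/-- classification: `a ≤ x ≤ b̄+1` in `r` implies `x ∈ {a, b̄, b̄+1}`. -/
theorem cls_bp (hr : IsLinExt r) (hr' : IsLinExt r') (hbt' : BarredTight r')
    (hsw : OrderSwitch r r' a b) (hb : b.val + 1 < n) {x : Letter n}
    (h1 : r La x) (h2 : r x (true, ⟨b.val + 1, hb⟩)) :
    x = La ∨ x = Lb ∨ x = (true, (⟨b.val + 1, hb⟩ : Fin n)) := by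
  rcases lintotal hr x Lb with h | h
  · rcases cover_ab hsw h1 h with h' | h'
    · exact Or.inl h'
    · exact Or.inr (Or.inl h')
  · obtain ⟨f, v⟩ := x
    cases f
    · exact Or.inl (by rw [gap_bp hr hr' hbt' hsw hb h h2])
    · have hv1 : b.val ≤ v.val := by
        have := (linmono_iff hr).1 h; rw [Fin.le_def] at this; simpa using this
      have hv2 : v.val ≤ b.val + 1 := by
        have := (linmono_iff hr).1 h2; rw [Fin.le_def] at this; simpa using this
      rcases Nat.eq_or_lt_of_le hv2 with h' | h'
      · exact Or.inr (Or.inr (by rw [show v = (⟨b.val + 1, hb⟩ : Fin n) from Fin.ext h']))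
      · exact Or.inr (Or.inl (by rw [show v = b from Fin.ext (by omega)]))

end Main

section Words

variable {n : ℕ} {r : Letter n → Letter n → Prop}

/-- The word of barred letters in column `j`, read bottom to top. -/
def colW (sh : YoungDiagram) (X : Filling n) (j : ℕ) : List (Fin n) :=
  (List.range (sh.colLen j)).reverse.filterMap fun i =>
    match X (i, j) with
    | some (true, b) => some b
    | _ => none

theorem vWord_eq (sh : YoungDiagram) (X : Filling n) :
    vWord sh X = (List.range (sh.rowLen 0)).flatMap (colW sh X) := rfl

/-- number of boxes in column `j` with barred entry `x`. -/
def colCnt (sh : YoungDiagram) (X : Filling n) (x : Fin n) (j : ℕ) : ℕ :=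
  ((Finset.range (sh.colLen j)).filter (fun i => X (i, j) = some (true, x))).card

/-- number of boxes in columns `< m` with barred entry `x`. -/
def cumB (sh : YoungDiagram) (X : Filling n) (x : Fin n) (m : ℕ) : ℕ :=
  ∑ c ∈ Finset.range m, colCnt sh X x c

theorem matchEq (o : Option (Letter n)) (x : Fin n) :
    (match o with | some (true, b) => some b | _ => none) = some x ↔ o = some (true, x) := by
  rcases o with _ | ⟨f, v⟩
  · simp
  · cases f <;> simp

theorem countP_reverse' {α} (l : List α) (p : α → Bool) : l.reverse.countP p = l.countP p := by
  rw [List.countP_eq_length_filter, List.countP_eq_length_filter, List.filter_reverse,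
    List.length_reverse]

theorem countP_eq_filter_card (m : ℕ) (P : ℕ → Prop) [DecidablePred P] :
    (List.range m).countP (fun i => decide (P i)) = ((Finset.range m).filter P).card := by
  rw [List.countP_eq_length_filter]; rfl

theorem colW_count (sh : YoungDiagram) (X : Filling n) (x : Fin n) (j : ℕ) :
    (colW sh X j).count x = colCnt sh X x j := by
  rw [colW, ConvAux.count_filterMap', countP_reverse']
  have h2 : colCnt sh X x j
      = (List.range (sh.colLen j)).countP (fun i => decide (X (i, j) = some (true, x))) := by
    rw [colCnt, countP_eq_filter_card]
  rw [h2]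
  apply List.countP_congr
  intro i _
  rcases hX : X (i, j) with _ | ⟨f, v⟩
  · simp [hX]
  · cases f
    · simp [hX]
    · by_cases hv : v = x <;> simp [hX, hv]

theorem colW_pairwise {sh : YoungDiagram} {T : Filling n} (hr : IsLinExt r)
    (hT : IsColoredTableau r sh T) (j : ℕ) :
    (colW sh T j).Pairwise (fun x y : Fin n => y.val ≤ x.val) := by
  apply ConvAux.pairwise_filterMap' _ (S := fun i i' : ℕ => i' < i)
  · rw [List.pairwise_reverse]
    exact List.pairwise_lt_range
  · intro i i' hii x hx y hy
    rw [matchEq] at hx hy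
    have := hT.2.2.1 i' i j _ _ (le_of_lt hii) hy hx
    have := (linmono_iff hr).1 this
    rwa [Fin.le_def] at this

theorem colLen_zero (sh : YoungDiagram) {c : ℕ} (hc : sh.rowLen 0 ≤ c) : sh.colLen c = 0 := by
  by_contra h
  have h1 : (0, c) ∈ sh := (YoungDiagram.mem_iff_lt_colLen (μ := sh)).2 (by omega)
  have h2 := (YoungDiagram.mem_iff_lt_rowLen (μ := sh)).1 h1
  omega

theorem colCnt_zero (sh : YoungDiagram) (X : Filling n) (x : Fin n) {c : ℕ}
    (hc : sh.rowLen 0 ≤ c) : colCnt sh X x c = 0 := by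
  rw [colCnt, colLen_zero sh hc]
  simp

theorem cumB_stab (sh : YoungDiagram) (X : Filling n) (x : Fin n) {m : ℕ}
    (hm : sh.rowLen 0 ≤ m) : cumB sh X x m = cumB sh X x (sh.rowLen 0) := by
  rw [cumB, cumB]
  symm
  apply Finset.sum_subset (Finset.range_subset_range.2 hm)
  intro c _ hc
  exact colCnt_zero sh X x (by simp at hc ⊢; omega)

theorem cumB_mono (sh : YoungDiagram) (X : Filling n) (x : Fin n) {m m' : ℕ} (h : m ≤ m') :
    cumB sh X x m ≤ cumB sh X x m' :=
  Finset.sum_le_sum_of_subset (Finset.range_subset_range.2 h)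

/-- The family of column-cut inequalities equivalent to `IsAlphaBallot` of `vWord`. -/
def Family (sh : YoungDiagram) (X : Filling n) (α : Fin n → ℕ) : Prop :=
  ∀ i : ℕ, ∀ h : i + 1 < n, ∀ j : ℕ,
    cumB sh X ⟨i + 1, h⟩ (j + 1) + α ⟨i + 1, h⟩ ≤
      cumB sh X ⟨i, Nat.lt_of_succ_lt h⟩ j + α ⟨i, Nat.lt_of_succ_lt h⟩

theorem count_flatMap {α β} [DecidableEq β] (g : α → List β) (l : List α) (x : β) :
    (l.flatMap g).count x = (l.map (fun c => (g c).count x)).sum := by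
  induction l with
  | nil => rfl
  | cons c l ih => simp [List.flatMap_cons, List.count_append, ih]

theorem count_rangeFlatMap (g : ℕ → List (Fin n)) (m : ℕ) (x : Fin n) :
    ((List.range m).flatMap g).count x = ∑ c ∈ Finset.range m, (g c).count x := by
  rw [count_flatMap]
  induction m with
  | zero => rfl
  | succ m ih => rw [List.range_succ, Finset.sum_range_succ, List.map_append, List.sum_append, ih]; simp

theorem prefix_append_left {α} {A q B : List α} (h : q <+: B) : A ++ q <+: A ++ B := by
  obtain ⟨t, ht⟩ := h
  exact ⟨t, by rw [List.append_assoc, ht]⟩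

theorem count_vWord (sh : YoungDiagram) (T : Filling n) (x : Fin n) :
    (vWord sh T).count x = cumB sh T x (sh.rowLen 0) := by
  rw [vWord_eq, count_rangeFlatMap, cumB]
  exact Finset.sum_congr rfl fun c _ => colW_count sh T x c

/-- Ballot implies the family. -/
theorem family_of_ballot {sh : YoungDiagram} {T : Filling n} {α : Fin n → ℕ}
    (hr : IsLinExt r) (hT : IsColoredTableau r sh T)
    (hb : IsAlphaBallot α (vWord sh T)) : Family sh T α := by
  intro i h j
  set L := sh.rowLen 0 with hL
  by_cases hjL : L ≤ j
  · have h1 := hb (vWord sh T) (List.prefix_refl _) i h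
    rw [count_vWord, count_vWord] at h1
    rw [cumB_stab sh T _ (by omega : L ≤ j + 1), cumB_stab sh T _ hjL]
    exact h1
  · push_neg at hjL
    set tW := (colW sh T j).takeWhile (fun x : Fin n => decide (i < x.val)) with htW
    set p := (List.range j).flatMap (colW sh T) ++ tW with hp
    have hsplitL : List.range L = List.range j ++ (List.range (L - j)).map (j + ·) := by
      rw [← List.range_add]
      congr 1
      omega
    have hLj : L - j = (L - j - 1) + 1 := by omega
    have hv : vWord sh T = (List.range j).flatMap (colW sh T) ++
        (colW sh T j ++ ((List.range (L - j - 1)).map (fun t => j + (t + 1))).flatMap (colW sh T)) := by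
      rw [vWord_eq, ← hL, hsplitL, List.flatMap_append]
      congr 1
      rw [hLj, List.range_succ_eq_map, List.map_cons, List.flatMap_cons]
      simp [Function.comp_def]
    have hpv : p <+: vWord sh T := by
      rw [hv, hp]
      apply prefix_append_left
      exact (List.takeWhile_prefix _).trans ⟨_, rfl⟩
    have hsorted := colW_pairwise hr hT j
    have hcnt1 : tW.count (⟨i + 1, h⟩ : Fin n) = colCnt sh T ⟨i + 1, h⟩ j := by
      rw [← colW_count]
      have hdec : colW sh T j = tW ++ (colW sh T j).dropWhile (fun x : Fin n => decide (i < x.val)) :=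
        (List.takeWhile_append_dropWhile).symm
      have hzero : ((colW sh T j).dropWhile (fun x : Fin n => decide (i < x.val))).count
          (⟨i + 1, h⟩ : Fin n) = 0 := by
        apply List.count_eq_zero.2
        intro hmem
        have := ConvAux.dropWhile_le hsorted i _ hmem
        simp at this
      conv_rhs => rw [hdec]
      rw [List.count_append, hzero]
      omega
    have hcnt2 : tW.count (⟨i, Nat.lt_of_succ_lt h⟩ : Fin n) = 0 := by
      apply List.count_eq_zero.2
      intro hmem
      have := List.mem_takeWhile_imp hmem
      simp at this
    have hb1 := hb p hpv i h
    rw [hp, List.count_append, List.count_append, hcnt1, hcnt2] at hb1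
    have hcum : ∀ x : Fin n, ((List.range j).flatMap (colW sh T)).count x = cumB sh T x j := by
      intro x
      rw [count_rangeFlatMap, cumB]
      exact Finset.sum_congr rfl fun c _ => colW_count sh T x c
    rw [hcum, hcum] at hb1
    have hsplit : cumB sh T ⟨i + 1, h⟩ (j + 1)
        = cumB sh T ⟨i + 1, h⟩ j + colCnt sh T ⟨i + 1, h⟩ j := Finset.sum_range_succ _ _
    omega

/-- The family implies ballot. -/
theorem ballot_of_family {sh : YoungDiagram} {T : Filling n} {α : Fin n → ℕ}
    (hf : Family sh T α) : IsAlphaBallot α (vWord sh T) := by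
  intro p hp i h
  rw [vWord_eq] at hp
  obtain ⟨l₁, l₂, hl, q, hpq, hlast⟩ := ConvAux.prefix_flatMap _ _ p hp
  set L := sh.rowLen 0 with hL
  set k := l₁.length with hk
  have hkL : k ≤ L := by
    have := congrArg List.length hl
    simp at this
    omega
  have hl₁ : l₁ = List.range k := by
    have h1 : (List.range L).take k = l₁ := by rw [hl]; exact List.take_left
    rw [← h1, List.take_range]
    congr 1
    omega
  have hcount : ∀ x : Fin n, p.count x = cumB sh T x k + q.count x := by
    intro x
    rw [hpq, List.count_append]
    congr 1
    rw [hl₁, count_rangeFlatMap, cumB]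
    exact Finset.sum_congr rfl fun c _ => colW_count sh T x c
  have key1 : p.count ⟨i + 1, h⟩ ≤ cumB sh T ⟨i + 1, h⟩ (k + 1) := by
    rw [hcount]
    rcases hlast with rfl | ⟨c, l₂', hc, hq⟩
    · simpa using le_trans (le_refl _) (cumB_mono sh T _ (Nat.le_succ k))
    · subst hc
      have hck : c = k := by
        have hlen : L = k + (l₂'.length + 1) := by
          have := congrArg List.length hl
          simp at this
          omega
        have h1 : (l₁ ++ c :: l₂')[k]? = some c := by
          rw [List.getElem?_append_right (by omega)]
          simp [hk]
        rw [← hl, List.getElem?_range (by omega)] at h1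
        exact (Option.some_inj.1 h1).symm
      have hqc : q.count (⟨i + 1, h⟩ : Fin n) ≤ colCnt sh T ⟨i + 1, h⟩ k := by
        rw [← colW_count, ← hck]
        exact hq.sublist.count_le _
      have hsplit : cumB sh T ⟨i + 1, h⟩ (k + 1)
          = cumB sh T ⟨i + 1, h⟩ k + colCnt sh T ⟨i + 1, h⟩ k := Finset.sum_range_succ _ _
      omega
  have key2 : cumB sh T ⟨i, Nat.lt_of_succ_lt h⟩ k ≤ p.count ⟨i, Nat.lt_of_succ_lt h⟩ := by
    rw [hcount]; omega
  have h3 := hf i h k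
  omega

end Words

section Conn

variable {n : ℕ} {r r' : Letter n → Letter n → Prop} {sh : YoungDiagram}
  {T T' : Filling n} {a b : Fin n}

/-- membership in the switch set `S`. -/
def Smem (T : Filling n) (a b : Fin n) (c : ℕ × ℕ) : Prop :=
  T c = some (false, a) ∨ T c = some (true, b)

theorem mem_sh_of_some {T : Filling n} (hT : IsColoredTableau r sh T) {c : ℕ × ℕ}
    {x : Letter n} (h : T c = some x) : c ∈ sh :=
  (hT.1 c).1 (by rw [h]; rfl)

theorem smem_mem_sh {T : Filling n} (hT : IsColoredTableau r sh T) {c : ℕ × ℕ}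
    (h : Smem T a b c) : c ∈ sh := by
  rcases h with h | h <;> exact mem_sh_of_some hT h

theorem boxadj_symm : Symmetric BoxAdj := by
  intro u v h
  rcases h with ⟨h1, h2⟩ | ⟨h1, h2⟩
  · exact Or.inl ⟨h1.symm, h2.symm⟩
  · exact Or.inr ⟨h1.symm, h2.symm⟩

theorem connin_symm (S : Set (ℕ × ℕ)) : Symmetric (ConnIn S) :=
  fun x y h => by
    haveI : Std.Symm (fun u v : ℕ × ℕ => u ∈ S ∧ v ∈ S ∧ BoxAdj u v) :=
      ⟨fun _ _ h => ⟨h.2.1, h.1, boxadj_symm h.2.2⟩⟩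
    exact (Relation.ReflTransGen.stdSymm (r := fun u v : ℕ × ℕ => u ∈ S ∧ v ∈ S ∧ BoxAdj u v)).symm x y h

theorem connin_trans {S : Set (ℕ × ℕ)} {c d e : ℕ × ℕ} (h1 : ConnIn S c d)
    (h2 : ConnIn S d e) : ConnIn S c e := Relation.ReflTransGen.trans h1 h2

/-- the `a`-counts agree on any union of connected components of `S`. -/
theorem classes_acount (hts : TableauSwitch a b T T') :
    ∀ X : Finset (ℕ × ℕ), (∀ c ∈ X, Smem T a b c) →
      (∀ c ∈ X, ∀ d, ConnIn {e | T e = some (false, a) ∨ T e = some (true, b)} c d →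
        Smem T a b d → d ∈ X) →
      (X.filter (fun c => T c = some (false, a))).card
        = (X.filter (fun c => T' c = some (false, a))).card := by
  intro X
  induction X using Finset.strongInduction with
  | _ X ih =>
    intro hXS hXcl
    rcases X.eq_empty_or_nonempty with rfl | ⟨c, hc⟩
    · simp
    set S : Set (ℕ × ℕ) := {e | T e = some (false, a) ∨ T e = some (true, b)} with hS
    set C := X.filter (fun d => ConnIn S c d) with hC
    have hCX : C ⊆ X := Finset.filter_subset _ _
    have hcC : c ∈ C := Finset.mem_filter.2 ⟨hc, Relation.ReflTransGen.refl⟩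
    have e1 : {d | ConnIn S c d ∧ T d = some (false, a)}
        = ↑(C.filter (fun d => T d = some (false, a))) := by
      ext d
      simp only [Set.mem_setOf_eq, Finset.coe_filter, Finset.mem_filter, hC]
      constructor
      · rintro ⟨h1, h2⟩
        exact ⟨⟨hXcl c hc d h1 (Or.inl h2), h1⟩, h2⟩
      · rintro ⟨⟨_, h1⟩, h2⟩
        exact ⟨h1, h2⟩
    have e2 : {d | ConnIn S c d ∧ T' d = some (false, a)}
        = ↑(C.filter (fun d => T' d = some (false, a))) := by
      ext d
      simp only [Set.mem_setOf_eq, Finset.coe_filter, Finset.mem_filter, hC]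
      constructor
      · rintro ⟨h1, h2⟩
        exact ⟨⟨hXcl c hc d h1 ((hts.2.1 d).2 (Or.inl h2)), h1⟩, h2⟩
      · rintro ⟨⟨_, h1⟩, h2⟩
        exact ⟨h1, h2⟩
    have hCeq : (C.filter (fun d => T d = some (false, a))).card
        = (C.filter (fun d => T' d = some (false, a))).card := by
      have := hts.2.2 c (hXS c hc)
      rw [e1, e2, Set.ncard_coe_finset, Set.ncard_coe_finset] at this
      exact this
    have hrec : ((X \ C).filter (fun d => T d = some (false, a))).card
        = ((X \ C).filter (fun d => T' d = some (false, a))).card := by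
      apply ih (X \ C)
      · refine Finset.sdiff_ssubset ?_ ?_ <;> first
          | exact hCX
          | exact ⟨c, hcC⟩
      · intro d hd
        exact hXS d (Finset.mem_sdiff.1 hd).1
      · intro d hd e hde hSe
        obtain ⟨hdX, hdC⟩ := Finset.mem_sdiff.1 hd
        refine Finset.mem_sdiff.2 ⟨hXcl d hdX e hde hSe, ?_⟩
        intro heC
        apply hdC
        rw [hC, Finset.mem_filter] at heC ⊢
        exact ⟨hdX, connin_trans heC.2 (connin_symm S hde)⟩
    have hsplit : ∀ U : Filling n,
        (X.filter (fun d => U d = some (false, a))).card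
          = (C.filter (fun d => U d = some (false, a))).card
            + ((X \ C).filter (fun d => U d = some (false, a))).card := by
      intro U
      rw [← Finset.card_union_of_disjoint]
      · congr 1
        rw [← Finset.filter_union, Finset.union_sdiff_of_subset hCX]
      · exact Finset.disjoint_filter_filter Finset.disjoint_sdiff
    rw [hsplit T, hsplit T', hCeq, hrec]

/-- boxes-to-columns counting. -/
theorem card_boxes (sh : YoungDiagram) (P : ℕ × ℕ → Prop) [DecidablePred P] (hsub : ∀ c, P c → c ∈ sh)
    (J : ℕ) (hJ : ∀ c, P c → c.2 < J) :
    (sh.cells.filter P).card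
      = ∑ c ∈ Finset.range J, ((Finset.range (sh.colLen c)).filter (fun i => P (i, c))).card := by
  have heq : sh.cells.filter P = (Finset.range J).biUnion
      (fun c => ((Finset.range (sh.colLen c)).filter (fun i => P (i, c))).image
        (fun i => (i, c))) := by
    ext ⟨i, c⟩
    simp only [Finset.mem_filter, Finset.mem_biUnion, Finset.mem_range, Finset.mem_image]
    constructor
    · rintro ⟨hcell, hP⟩
      refine ⟨c, hJ _ hP, i, ⟨?_, hP⟩, rfl⟩
      exact (YoungDiagram.mem_iff_lt_colLen (μ := sh)).1 (by rwa [YoungDiagram.mem_cells] at hcell)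
    · rintro ⟨c', _, i', ⟨hi', hP⟩, heq⟩
      obtain ⟨rfl, rfl⟩ : i' = i ∧ c' = c := by
        constructor <;> [exact congrArg Prod.fst heq; exact congrArg Prod.snd heq]
      exact ⟨by rw [YoungDiagram.mem_cells]; exact hsub _ hP, hP⟩
  rw [heq, Finset.card_biUnion]
  · apply Finset.sum_congr rfl
    intro c _
    exact Finset.card_image_of_injective _ (fun i i' h => congrArg Prod.fst h)
  · intro c1 _ c2 _ hne
    simp only [Finset.disjoint_left, Finset.mem_image]
    rintro x ⟨i1, _, rfl⟩ ⟨i2, _, hx⟩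
    exact hne (congrArg Prod.snd hx).symm

end Conn

section NoCross

variable {n : ℕ} {r r' : Letter n → Letter n → Prop} {sh : YoungDiagram}
  {T T' : Filling n} {a b : Fin n}

/-- number of `a`-boxes in column `c`. -/
def colA (sh : YoungDiagram) (X : Filling n) (a : Fin n) (c : ℕ) : ℕ :=
  ((Finset.range (sh.colLen c)).filter (fun i => X (i, c) = some (false, a))).card

/-- number of `S`-boxes in column `c`. -/
noncomputable def colS (sh : YoungDiagram) (T : Filling n) (a b : Fin n) (c : ℕ) : ℕ :=
  ((Finset.range (sh.colLen c)).filter (fun i => Smem T a b (i, c))).card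

theorem col_partition {U : Filling n} (c : ℕ)
    (h : ∀ i : ℕ, Smem T a b (i, c) ↔ (U (i, c) = some (false, a) ∨ U (i, c) = some (true, b))) :
    colA sh U a c + colCnt sh U b c = colS sh T a b c := by
  rw [colA, colCnt, colS]
  rw [← Finset.card_union_of_disjoint]
  · congr 1
    rw [← Finset.filter_or]
    apply Finset.filter_congr
    intro i _
    rw [h i]
  · rw [Finset.disjoint_filter]
    intro i _ h1 h2
    rw [h1] at h2
    exact absurd (congrArg Prod.fst (Option.some_inj.1 h2)) (by simp)

theorem colCnt_eq_of_ne (hts : TableauSwitch a b T T') {x : Fin n} (hx : x ≠ b) (c : ℕ) :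
    colCnt sh T x c = colCnt sh T' x c := by
  rw [colCnt, colCnt]
  congr 1
  apply Finset.filter_congr
  intro i _
  have hnS : ∀ U V : Filling n, (∀ e, e ∈ {e | U e = some (false, a) ∨ U e = some (true, b)} ↔
      (V e = some (false, a) ∨ V e = some (true, b))) →
      (∀ e, e ∉ {e | U e = some (false, a) ∨ U e = some (true, b)} → V e = U e) →
      U (i, c) = some (true, x) → V (i, c) = some (true, x) := by
    intro U V hiff hout hU
    have hnot : (i, c) ∉ {e | U e = some (false, a) ∨ U e = some (true, b)} := by
      intro hmem
      rcases hmem with h | h <;> rw [hU] at h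
      · exact absurd (congrArg Prod.fst (Option.some_inj.1 h)) (by simp)
      · exact hx (congrArg Prod.snd (Option.some_inj.1 h))
    rw [hout _ hnot, hU]
  constructor
  · exact hnS T T' hts.2.1 hts.1
  · intro hT'x
    by_cases hmem : (i, c) ∈ {e | T e = some (false, a) ∨ T e = some (true, b)}
    · exfalso
      rcases (hts.2.1 _).1 hmem with h | h <;> rw [hT'x] at h
      · exact absurd (congrArg Prod.fst (Option.some_inj.1 h)) (by simp)
      · exact hx (congrArg Prod.snd (Option.some_inj.1 h))
    · rw [← hts.1 _ hmem, hT'x]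

/-- If there is no `S`-overlap between columns `j` and `j+1`, the cumulative `b̄`-counts
through column `j` agree. -/
theorem cumB_eq_of_no_overlap (hts : TableauSwitch a b T T')
    (hT : IsColoredTableau r sh T) (j : ℕ)
    (hno : ¬∃ w, Smem T a b (w, j) ∧ Smem T a b (w, j + 1)) :
    cumB sh T b (j + 1) = cumB sh T' b (j + 1) := by
  classical
  set S : Set (ℕ × ℕ) := {e | T e = some (false, a) ∨ T e = some (true, b)} with hS
  set X : Finset (ℕ × ℕ) := sh.cells.filter (fun c => Smem T a b c ∧ c.2 ≤ j) with hX
  have hXmem : ∀ c, c ∈ X ↔ (c ∈ sh ∧ Smem T a b c ∧ c.2 ≤ j) := by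
    intro c
    rw [hX, Finset.mem_filter, YoungDiagram.mem_cells]
  have hcl : ∀ c ∈ X, ∀ d, ConnIn S c d → Smem T a b d → d ∈ X := by
    intro c hc d hconn hd
    rw [hXmem] at hc
    refine (hXmem d).2 ⟨smem_mem_sh hT hd, hd, ?_⟩
    clear hd
    induction hconn with
    | refl => exact hc.2.2
    | tail h1 h2 ih =>
      rename_i b' d'
      rcases h2.2.2 with ⟨hrow, hcol⟩ | ⟨hcol, _⟩
      · rcases hcol with h' | h'
        · rcases Nat.lt_or_ge (d'.2) (j + 1) with hlt | hge
          · omega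
          · exfalso
            have hd2 : d'.2 = j + 1 := by omega
            have hb2 : b'.2 = j := by omega
            apply hno
            refine ⟨b'.1, ?_, ?_⟩
            · have : (b'.1, j) = b' := by rw [← hb2]
              rw [this]; exact h2.1
            · have : (b'.1, j + 1) = d' := by rw [hrow, ← hd2]
              rw [this]; exact h2.2.1
        · omega
      · omega
  have hacount := classes_acount hts X (fun c hc => ((hXmem c).1 hc).2.1) hcl
  -- translate both sides into column sums
  have htrans : ∀ U : Filling n, (∀ e, U e = some (false, a) → Smem T a b e) →
      (X.filter (fun c => U c = some (false, a))).card
        = ∑ c ∈ Finset.range (j + 1), colA sh U a c := by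
    intro U hUS
    have h1 : X.filter (fun c => U c = some (false, a))
        = sh.cells.filter (fun c => U c = some (false, a) ∧ c.2 ≤ j) := by
      ext c
      rw [Finset.mem_filter, hXmem, Finset.mem_filter, YoungDiagram.mem_cells]
      constructor
      · rintro ⟨⟨h1, _, h3⟩, h4⟩
        exact ⟨h1, h4, h3⟩
      · rintro ⟨h1, h2, h3⟩
        exact ⟨⟨h1, hUS _ h2, h3⟩, h2⟩
    rw [h1, card_boxes sh (fun c => U c = some (false, a) ∧ c.2 ≤ j)
      (fun c hc => smem_mem_sh hT (hUS _ hc.1)) (j + 1) (fun c hc => by omega)]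
    apply Finset.sum_congr rfl
    intro c hc
    rw [colA]
    congr 1
    apply Finset.filter_congr
    intro i _
    simp only [Finset.mem_range] at hc
    have : c ≤ j := by omega
    simp [this]
  have hTa : (∀ e, T e = some (false, a) → Smem T a b e) := fun e h => Or.inl h
  have hT'a : (∀ e, T' e = some (false, a) → Smem T a b e) :=
    fun e h => (hts.2.1 e).2 (Or.inl h)
  rw [htrans T hTa, htrans T' hT'a] at hacount
  -- per-column partition
  have hpart : ∀ c ∈ Finset.range (j + 1),
      colA sh T a c + colCnt sh T b c = colS sh T a b c := by
    intro c _
    exact col_partition c (fun i => Iff.rfl)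
  have hpart' : ∀ c ∈ Finset.range (j + 1),
      colA sh T' a c + colCnt sh T' b c = colS sh T a b c := by
    intro c _
    exact col_partition c (fun i => hts.2.1 (i, c))
  have hsum : cumB sh T b (j + 1) + ∑ c ∈ Finset.range (j + 1), colA sh T a c
      = ∑ c ∈ Finset.range (j + 1), colS sh T a b c := by
    rw [cumB, ← Finset.sum_add_distrib]
    apply Finset.sum_congr rfl
    intro c hc
    rw [Nat.add_comm]
    exact hpart c hc
  have hsum' : cumB sh T' b (j + 1) + ∑ c ∈ Finset.range (j + 1), colA sh T' a c
      = ∑ c ∈ Finset.range (j + 1), colS sh T a b c := by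
    rw [cumB, ← Finset.sum_add_distrib]
    apply Finset.sum_congr rfl
    intro c hc
    rw [Nat.add_comm]
    exact hpart' c hc
  omega

end NoCross

section LocalLemmas

variable {n : ℕ} {r r' : Letter n → Letter n → Prop} {sh : YoungDiagram}
  {T T' : Filling n} {a b : Fin n}

theorem smem_bounds (hr : IsLinExt r) (hsw : OrderSwitch r r' a b) {c : ℕ × ℕ}
    (h : Smem T a b c) : ∃ y : Letter n, T c = some y ∧ r ((false, a) : Letter n) y ∧
      r y ((true, b) : Letter n) := by
  rcases h with h | h
  · exact ⟨_, h, linrefl hr _, rab hsw⟩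
  · exact ⟨_, h, rab hsw, linrefl hr _⟩

theorem colA_le_one {U : Filling n} (hU : IsColoredTableau r sh U) (c : ℕ) :
    colA sh U a c ≤ 1 := by
  apply Finset.card_le_one.2
  intro i hi i' hi'
  simp only [Finset.mem_filter] at hi hi'
  by_contra hne
  exact hU.2.2.2.1 i i' c a hne hi.2 hi'.2

/-- `colCnt U b c ≥ colS c - 1` stated additively. -/
theorem colCnt_ge {U : Filling n} (hU : IsColoredTableau r sh U) (c : ℕ)
    (h : ∀ i : ℕ, Smem T a b (i, c) ↔ (U (i, c) = some (false, a) ∨ U (i, c) = some (true, b))) :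
    colS sh T a b c ≤ colCnt sh U b c + 1 := by
  have h1 := col_partition (sh := sh) c h
  have h2 := colA_le_one (a := a) hU c
  omega

/-- Local lemma, left version: with an overlap at columns `j, j+1`, the number of
`b̄-1`-boxes in column `j` is at most `colS (j+1) - 1`. -/
theorem Lleft_core (hr : IsLinExt r) (hbt : BarredTight r)
    (hsw : OrderSwitch r r' a b) (hT : IsColoredTableau r sh T)
    (hb : 0 < b.val) {j w : ℕ}
    (hw1 : Smem T a b (w, j)) (hw2 : Smem T a b (w, j + 1)) :
    colCnt sh T ⟨b.val - 1, by omega⟩ j + 1 ≤ colS sh T a b (j + 1) := by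
  set bm : Fin n := ⟨b.val - 1, by omega⟩ with hbm
  have key : ∀ i : ℕ, T (i, j) = some (true, bm) → i < w ∧ Smem T a b (i, j + 1) := by
    intro i hi
    have hiw : i < w := by
      rcases Nat.lt_or_ge i w with h | h
      · exact h
      · exfalso
        obtain ⟨yw, hyw, hyw1, hyw2⟩ := smem_bounds hr hsw hw1
        have hcol := hT.2.2.1 w i j _ _ h hyw hi
        rcases hw1 with h1 | h1
        · have hywa : yw = ((false, a) : Letter n) := by
            rw [h1] at hyw; exact (Option.some_inj.1 hyw).symm
          rw [hywa] at hcol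
          have h3 : r ((true, bm) : Letter n) ((false, a) : Letter n) := r_bm_a hr hsw hb
          have h4 := linantisymm hr hcol h3
          exact absurd (congrArg Prod.fst h4) (by simp)
        · have hywb : yw = ((true, b) : Letter n) := by
            rw [h1] at hyw; exact (Option.some_inj.1 hyw).symm
          rw [hywb] at hcol
          have h3 : r ((true, bm) : Letter n) ((true, b) : Letter n) :=
            linmono hr (by rw [Fin.le_def]; exact Nat.sub_le _ _)
          have h4 := linantisymm hr hcol h3
          have h5 : b.val = b.val - 1 := by
            have := congrArg (fun z : Letter n => z.2.val) h4
            simpa [hbm] using this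
          omega
    refine ⟨hiw, ?_⟩
    have hmem : (i, j + 1) ∈ sh :=
      sh.up_left_mem (le_of_lt hiw) (le_refl _) (smem_mem_sh hT hw2)
    obtain ⟨y, hy⟩ := Option.isSome_iff_exists.1 ((hT.1 _).2 hmem)
    obtain ⟨yw', hyw', hyw'1, hyw'2⟩ := smem_bounds hr hsw hw2
    have hrow : r ((true, bm) : Letter n) y := hT.2.1 i j (j + 1) _ _ (by omega) hi hy
    have hcolup : r y ((true, b) : Letter n) :=
      lintrans hr (hT.2.2.1 i w (j + 1) _ _ (le_of_lt hiw) hy hyw') hyw'2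
    rcases cls_bm hr hbt hsw hb hrow hcolup with h | h | h
    · exfalso
      rw [h] at hy
      exact hT.2.2.2.2 i j (j + 1) bm (by omega) hi hy
    · exact Or.inl (by rw [← h]; exact hy)
    · exact Or.inr (by rw [← h]; exact hy)
  -- counting
  set K := (Finset.range (sh.colLen j)).filter (fun i => T (i, j) = some (true, bm)) with hK
  set A := (Finset.range (sh.colLen (j + 1))).filter (fun i => Smem T a b (i, j + 1)) with hA
  have hwA : w ∈ A := by
    rw [hA, Finset.mem_filter, Finset.mem_range]
    exact ⟨(YoungDiagram.mem_iff_lt_colLen (μ := sh)).1 (smem_mem_sh hT hw2), hw2⟩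
  have hKA : K ⊆ A.erase w := by
    intro i hi
    rw [hK, Finset.mem_filter] at hi
    obtain ⟨hiw, hsm⟩ := key i hi.2
    rw [Finset.mem_erase, hA, Finset.mem_filter, Finset.mem_range]
    exact ⟨by omega, (YoungDiagram.mem_iff_lt_colLen (μ := sh)).1 (smem_mem_sh hT hsm), hsm⟩
  have h1 : K.card ≤ A.card - 1 := by
    calc K.card ≤ (A.erase w).card := Finset.card_le_card hKA
    _ = A.card - 1 := Finset.card_erase_of_mem hwA
  have h2 : 0 < A.card := Finset.card_pos.2 ⟨w, hwA⟩
  have : colCnt sh T bm j = K.card := rfl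
  have : colS sh T a b (j + 1) = A.card := rfl
  omega

/-- Local lemma, right version. -/
theorem Lright_core (hr : IsLinExt r) (hr' : IsLinExt r') (hbt' : BarredTight r')
    (hsw : OrderSwitch r r' a b) (hT : IsColoredTableau r sh T)
    (hb : b.val + 1 < n) {j w : ℕ}
    (hw1 : Smem T a b (w, j)) (hw2 : Smem T a b (w, j + 1)) :
    colCnt sh T ⟨b.val + 1, hb⟩ (j + 1) + 1 ≤ colS sh T a b j := by
  set bp : Fin n := ⟨b.val + 1, hb⟩ with hbp
  have key : ∀ i : ℕ, T (i, j + 1) = some (true, bp) → w < i ∧ Smem T a b (i, j) := by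
    intro i hi
    obtain ⟨yw', hyw', hyw'1, hyw'2⟩ := smem_bounds hr hsw hw2
    have hiw : w < i := by
      rcases Nat.lt_or_ge w i with h | h
      · exact h
      · exfalso
        have hcol := hT.2.2.1 i w (j + 1) _ _ h hi hyw'
        have h2 : r ((true, bp) : Letter n) ((true, b) : Letter n) :=
          lintrans hr hcol hyw'2
        have h3 : r ((true, b) : Letter n) ((true, bp) : Letter n) :=
          linmono hr (by rw [Fin.le_def]; exact Nat.le_succ _)
        have := linantisymm hr h2 h3
        have := congrArg (fun z : Letter n => z.2.val) this
        simp [hbp] at this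
    refine ⟨hiw, ?_⟩
    have hmem : (i, j) ∈ sh :=
      sh.up_left_mem (le_refl _) (by omega) (mem_sh_of_some hT hi)
    obtain ⟨y, hy⟩ := Option.isSome_iff_exists.1 ((hT.1 _).2 hmem)
    obtain ⟨yw, hyw, hyw1, hyw2⟩ := smem_bounds hr hsw hw1
    have hrow : r y ((true, bp) : Letter n) := hT.2.1 i j (j + 1) _ _ (by omega) hy hi
    have hcoldown : r ((false, a) : Letter n) y :=
      lintrans hr hyw1 (hT.2.2.1 w i j _ _ (le_of_lt hiw) hyw hy)
    rcases cls_bp hr hr' hbt' hsw hb hcoldown hrow with h | h | h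
    · exact Or.inl (by rw [← h]; exact hy)
    · exact Or.inr (by rw [← h]; exact hy)
    · exfalso
      rw [h] at hy
      exact hT.2.2.2.2 i (j + 1) j bp (by omega) hi hy
  -- counting
  set K := (Finset.range (sh.colLen (j + 1))).filter (fun i => T (i, j + 1) = some (true, bp))
    with hK
  set A := (Finset.range (sh.colLen j)).filter (fun i => Smem T a b (i, j)) with hA
  have hwA : w ∈ A := by
    rw [hA, Finset.mem_filter, Finset.mem_range]
    exact ⟨(YoungDiagram.mem_iff_lt_colLen (μ := sh)).1 (smem_mem_sh hT hw1), hw1⟩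
  have hKA : K ⊆ A.erase w := by
    intro i hi
    rw [hK, Finset.mem_filter] at hi
    obtain ⟨hiw, hsm⟩ := key i hi.2
    rw [Finset.mem_erase, hA, Finset.mem_filter, Finset.mem_range]
    exact ⟨by omega, (YoungDiagram.mem_iff_lt_colLen (μ := sh)).1 (smem_mem_sh hT hsm), hsm⟩
  have h1 : K.card ≤ A.card - 1 := by
    calc K.card ≤ (A.erase w).card := Finset.card_le_card hKA
    _ = A.card - 1 := Finset.card_erase_of_mem hwA
  have h2 : 0 < A.card := Finset.card_pos.2 ⟨w, hwA⟩
  have : colCnt sh T bp (j + 1) = K.card := rfl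
  have : colS sh T a b j = A.card := rfl
  omega

end LocalLemmas

section Numeric

/-- abstract downward-induction transfer for the pair `(b-1, b)`. -/
theorem numA (L : ℕ) (F F' G C' N : ℕ → ℕ) (A B : ℕ)
    (hF' : ∀ j, F' (j + 1) = F' j + C' j)
    (hG : ∀ j, G (j + 1) = G j + N j)
    (hstab : ∀ j, L ≤ j → F' j = F j)
    (hov : ∀ j, F' (j + 1) ≠ F (j + 1) → N j ≤ C' (j + 1))
    (hfam : ∀ j, F (j + 1) + A ≤ G j + B) : ∀ j, F' (j + 1) + A ≤ G j + B := by
  have main : ∀ k j, L ≤ j + k → F' (j + 1) + A ≤ G j + B := by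
    intro k
    induction k with
    | zero =>
      intro j hj
      rw [hstab (j + 1) (by omega)]
      exact hfam j
    | succ k ih =>
      intro j hj
      by_cases he : F' (j + 1) = F (j + 1)
      · rw [he]; exact hfam j
      · have h1 := ih (j + 1) (by omega)
        have h2 := hov j he
        have h3 := hF' (j + 1)
        have h4 := hG j
        omega
  intro j
  exact main L j (by omega)

/-- abstract upward-induction transfer for the pair `(b, b+1)`. -/
theorem numB (F F' Gp C' Np : ℕ → ℕ) (A B : ℕ)
    (hF'0 : F' 0 = F 0)
    (hF' : ∀ j, F' (j + 1) = F' j + C' j)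
    (hGp : ∀ j, Gp (j + 1) = Gp j + Np j)
    (hov : ∀ j, F' (j + 1) ≠ F (j + 1) → Np (j + 1) ≤ C' j)
    (hfam : ∀ j, Gp (j + 1) + A ≤ F j + B) : ∀ j, Gp (j + 1) + A ≤ F' j + B := by
  intro j
  induction j with
  | zero => rw [hF'0]; exact hfam 0
  | succ j ih =>
    by_cases he : F' (j + 1) = F (j + 1)
    · rw [he]; exact hfam (j + 1)
    · have h2 := hov j he
      have h3 := hF' j
      have h4 := hGp (j + 1)
      omega

end Numeric

section Assemble

variable {n : ℕ} {r r' : Letter n → Letter n → Prop} {sh : YoungDiagram}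
  {T T' : Filling n} {a b : Fin n} {α : Fin n → ℕ}

theorem cumB_eq_of_ne (hts : TableauSwitch a b T T') {x : Fin n} (hx : x ≠ b) (m : ℕ) :
    cumB sh T x m = cumB sh T' x m :=
  Finset.sum_congr rfl fun c _ => colCnt_eq_of_ne hts hx c

theorem overlap_of_ne (hts : TableauSwitch a b T T') (hT : IsColoredTableau r sh T) (j : ℕ)
    (hne : cumB sh T b (j + 1) ≠ cumB sh T' b (j + 1)) :
    ∃ w, Smem T a b (w, j) ∧ Smem T a b (w, j + 1) := by
  by_contra hno
  exact hne (cumB_eq_of_no_overlap hts hT j hno)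

theorem smem_col_lt (hT : IsColoredTableau r sh T) {w j : ℕ} (h : Smem T a b (w, j)) :
    j < sh.rowLen 0 := by
  have h1 := smem_mem_sh hT h
  have h2 := (YoungDiagram.mem_iff_lt_rowLen (μ := sh)).1 h1
  have h3 : sh.rowLen w ≤ sh.rowLen 0 := sh.rowLen_anti 0 w (by omega)
  omega

theorem cumB_b_stab (hts : TableauSwitch a b T T') (hT : IsColoredTableau r sh T)
    {j : ℕ} (hj : sh.rowLen 0 ≤ j) : cumB sh T' b j = cumB sh T b j := by
  set L := sh.rowLen 0 with hL
  rw [cumB_stab sh T' b hj, cumB_stab sh T b hj, ← hL]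
  rcases Nat.eq_zero_or_pos L with h0 | hpos
  · rw [h0]; rfl
  · have hL1 : L = (L - 1) + 1 := by omega
    have hno : ¬∃ w, Smem T a b (w, L - 1) ∧ Smem T a b (w, (L - 1) + 1) := by
      rintro ⟨w, _, hw2⟩
      have := smem_col_lt hT hw2
      omega
    rw [hL1]
    exact (cumB_eq_of_no_overlap hts hT (L - 1) hno).symm

theorem ovLeft (hr : IsLinExt r) (hr' : IsLinExt r') (hbt : BarredTight r)
    (hsw : OrderSwitch r r' a b) (hT : IsColoredTableau r sh T)
    (hT' : IsColoredTableau r' sh T') (hts : TableauSwitch a b T T')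
    (hb : 0 < b.val) (j : ℕ)
    (hne : cumB sh T b (j + 1) ≠ cumB sh T' b (j + 1)) :
    colCnt sh T ⟨b.val - 1, by omega⟩ j ≤ colCnt sh T b (j + 1) ∧
      colCnt sh T ⟨b.val - 1, by omega⟩ j ≤ colCnt sh T' b (j + 1) := by
  obtain ⟨w, hw1, hw2⟩ := overlap_of_ne hts hT j hne
  have h1 := Lleft_core hr hbt hsw hT hb hw1 hw2
  have h2 := colCnt_ge (T := T) (a := a) (b := b) hT (j + 1) (fun i => Iff.rfl)
  have h3 := colCnt_ge (T := T) (a := a) (b := b) hT' (j + 1) (fun i => hts.2.1 _)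
  exact ⟨by omega, by omega⟩

theorem ovRight (hr : IsLinExt r) (hr' : IsLinExt r') (hbt' : BarredTight r')
    (hsw : OrderSwitch r r' a b) (hT : IsColoredTableau r sh T)
    (hT' : IsColoredTableau r' sh T') (hts : TableauSwitch a b T T')
    (hb : b.val + 1 < n) (j : ℕ)
    (hne : cumB sh T b (j + 1) ≠ cumB sh T' b (j + 1)) :
    colCnt sh T ⟨b.val + 1, hb⟩ (j + 1) ≤ colCnt sh T b j ∧
      colCnt sh T ⟨b.val + 1, hb⟩ (j + 1) ≤ colCnt sh T' b j := by
  obtain ⟨w, hw1, hw2⟩ := overlap_of_ne hts hT j hne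
  have h1 := Lright_core hr hr' hbt' hsw hT hb hw1 hw2
  have h2 := colCnt_ge (T := T) (a := a) (b := b) hT j (fun i => Iff.rfl)
  have h3 := colCnt_ge (T := T) (a := a) (b := b) hT' j (fun i => hts.2.1 _)
  exact ⟨by omega, by omega⟩

theorem family_transfer (hr : IsLinExt r) (hr' : IsLinExt r')
    (hbt : BarredTight r) (hbt' : BarredTight r') (hsw : OrderSwitch r r' a b)
    (hT : IsColoredTableau r sh T) (hT' : IsColoredTableau r' sh T')
    (hts : TableauSwitch a b T T')
    (hfam : Family sh T α) : Family sh T' α := by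
  intro i h j
  set L := sh.rowLen 0 with hL
  by_cases hib : (⟨i + 1, h⟩ : Fin n) = b
  · -- pair (b-1, b); i = b.val - 1
    have hbval : b.val = i + 1 := by rw [← hib]
    have hbm : (⟨i, Nat.lt_of_succ_lt h⟩ : Fin n) = (⟨b.val - 1, by omega⟩ : Fin n) := by
      rw [Fin.ext_iff]; simp; omega
    have hbmne : (⟨i, Nat.lt_of_succ_lt h⟩ : Fin n) ≠ b := by
      intro he
      have := congrArg Fin.val he
      simp at this
      omega
    rw [hib, ← cumB_eq_of_ne hts hbmne]
    refine numA L (cumB sh T b) (cumB sh T' b) (cumB sh T ⟨i, Nat.lt_of_succ_lt h⟩)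
      (colCnt sh T' b) (colCnt sh T ⟨i, Nat.lt_of_succ_lt h⟩) (α b)
      (α ⟨i, Nat.lt_of_succ_lt h⟩) (fun j => Finset.sum_range_succ _ _)
      (fun j => Finset.sum_range_succ _ _)
      (fun j hj => cumB_b_stab hts hT hj) ?_ ?_ j
    · intro j hne
      have := (ovLeft hr hr' hbt hsw hT hT' hts (by omega) j (fun he => hne he.symm)).2
      rw [hbm]
      exact this
    · intro j
      have := hfam i h j
      rw [hib] at this
      exact this
  · by_cases hia : (⟨i, Nat.lt_of_succ_lt h⟩ : Fin n) = b
    · -- pair (b, b+1); i = b.val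
      have hbval : b.val = i := by rw [← hia]
      have hbp : (⟨i + 1, h⟩ : Fin n) = (⟨b.val + 1, by omega⟩ : Fin n) := by
        rw [Fin.ext_iff]; simp; omega
      have hbpne : (⟨i + 1, h⟩ : Fin n) ≠ b := hib
      rw [hia, ← cumB_eq_of_ne hts hbpne]
      refine numB (cumB sh T b) (cumB sh T' b) (cumB sh T ⟨i + 1, h⟩)
        (colCnt sh T' b) (colCnt sh T ⟨i + 1, h⟩) (α ⟨i + 1, h⟩) (α b)
        rfl (fun j => Finset.sum_range_succ _ _) (fun j => Finset.sum_range_succ _ _)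
        ?_ ?_ j
      · intro j hne
        have := (ovRight hr hr' hbt' hsw hT hT' hts (by omega) j (fun he => hne he.symm)).2
        rw [hbp]
        exact this
      · intro j
        have := hfam i h j
        rw [hia] at this
        exact this
    · rw [← cumB_eq_of_ne hts hib, ← cumB_eq_of_ne hts hia]
      exact hfam i h j

theorem family_transfer' (hr : IsLinExt r) (hr' : IsLinExt r')
    (hbt : BarredTight r) (hbt' : BarredTight r') (hsw : OrderSwitch r r' a b)
    (hT : IsColoredTableau r sh T) (hT' : IsColoredTableau r' sh T')
    (hts : TableauSwitch a b T T')
    (hfam : Family sh T' α) : Family sh T α := by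
  intro i h j
  set L := sh.rowLen 0 with hL
  by_cases hib : (⟨i + 1, h⟩ : Fin n) = b
  · have hbval : b.val = i + 1 := by rw [← hib]
    have hbm : (⟨i, Nat.lt_of_succ_lt h⟩ : Fin n) = (⟨b.val - 1, by omega⟩ : Fin n) := by
      rw [Fin.ext_iff]; simp; omega
    have hbmne : (⟨i, Nat.lt_of_succ_lt h⟩ : Fin n) ≠ b := by
      intro he
      have := congrArg Fin.val he
      simp at this
      omega
    rw [hib, cumB_eq_of_ne hts hbmne]
    refine numA L (cumB sh T' b) (cumB sh T b) (cumB sh T' ⟨i, Nat.lt_of_succ_lt h⟩)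
      (colCnt sh T b) (colCnt sh T' ⟨i, Nat.lt_of_succ_lt h⟩) (α b)
      (α ⟨i, Nat.lt_of_succ_lt h⟩) (fun j => Finset.sum_range_succ _ _)
      (fun j => Finset.sum_range_succ _ _)
      (fun j hj => (cumB_b_stab hts hT hj).symm) ?_ ?_ j
    · intro j hne
      have h1 := (ovLeft hr hr' hbt hsw hT hT' hts (by omega) j hne).1
      have h2 : colCnt sh T (⟨b.val - 1, by omega⟩ : Fin n) j
          = colCnt sh T' (⟨b.val - 1, by omega⟩ : Fin n) j := by
        refine colCnt_eq_of_ne hts ?_ j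
        intro he
        have := congrArg Fin.val he
        simp at this
        omega
      rw [hbm, ← h2]
      exact h1
    · intro j
      have := hfam i h j
      rw [hib] at this
      exact this
  · by_cases hia : (⟨i, Nat.lt_of_succ_lt h⟩ : Fin n) = b
    · have hbval : b.val = i := by rw [← hia]
      have hbp : (⟨i + 1, h⟩ : Fin n) = (⟨b.val + 1, by omega⟩ : Fin n) := by
        rw [Fin.ext_iff]; simp; omega
      have hbpne : (⟨i + 1, h⟩ : Fin n) ≠ b := hib
      rw [hia, cumB_eq_of_ne hts hbpne]
      refine numB (cumB sh T' b) (cumB sh T b) (cumB sh T' ⟨i + 1, h⟩)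
        (colCnt sh T b) (colCnt sh T' ⟨i + 1, h⟩) (α ⟨i + 1, h⟩) (α b)
        rfl (fun j => Finset.sum_range_succ _ _) (fun j => Finset.sum_range_succ _ _)
        ?_ ?_ j
      · intro j hne
        have h1 := (ovRight hr hr' hbt' hsw hT hT' hts (by omega) j hne).1
        have h2 : colCnt sh T' (⟨b.val + 1, by omega⟩ : Fin n) (j + 1)
            = colCnt sh T (⟨b.val + 1, by omega⟩ : Fin n) (j + 1) := by
          refine (colCnt_eq_of_ne hts ?_ (j + 1)).symm
          intro he
          have := congrArg Fin.val he
          simp at this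
        rw [hbp, ← h2.symm]
        exact h1
      · intro j
        have := hfam i h j
        rw [hia] at this
        exact this
    · rw [cumB_eq_of_ne hts hib, cumB_eq_of_ne hts hia]
      exact hfam i h j

end Assemble


/-- If `<` and `≺` are barred-tight total orders, `T`, `T'` are colored
tableaux related by a single conversion switch, and `α` is their common unbarred content,
then `v(T)` is an `α`-ballot sequence iff `v(T')` is. -/
theorem vWord_alphaBallot_iff_of_single_switch {n : ℕ} (r r' : Letter n → Letter n → Prop)
    (hr : IsLinExt r) (hr' : IsLinExt r')
    (hbt : BarredTight r) (hbt' : BarredTight r')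
    (sh : YoungDiagram) (T T' : Filling n)
    (hT : IsColoredTableau r sh T) (hT' : IsColoredTableau r' sh T')
    (a b : Fin n) (hsw : OrderSwitch r r' a b) (hts : TableauSwitch a b T T')
    (α : Fin n → ℕ) (hα : unbarredContent sh T = α) (hα' : unbarredContent sh T' = α) :
    IsAlphaBallot α (vWord sh T) ↔ IsAlphaBallot α (vWord sh T') := by
  constructor
  · intro hb
    exact ballot_of_family
      (family_transfer hr hr' hbt hbt' hsw hT hT' hts (family_of_ballot hr hT hb))
  · intro hb
    exact ballot_of_family
      (family_transfer' hr hr' hbt hbt' hsw hT hT' hts (family_of_ballot hr' hT' hb))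
end

section
/- Let < be the natural order 1̄<1<2̄<2<⋯<n̄<n on 𝒜ₙ, let ν be a Young diagram, and let the southwest corner of ν be the box in the leftmost column of its bottom row. If T is a colored tableau of shape ν with respect to < whose southwest corner contains an unbarred letter i, then the filling T′ obtained from T by replacing that entry with ī is again a colored tableau with respect to <, and the total reverse reading words satisfy w(T′) = w(T); likewise, if the southwest corner of T contains a barred letter ī, replacing it with i yields a colored tableau with the same total reverse reading word. -/
open scoped Classical

namespace SWToggle

variable {n : ℕ}

def tokU (o : Option (Letter n)) : List (Fin n) :=
  (match o with | some (false, a) => some a | _ => none).toList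

def tokV (o : Option (Letter n)) : List (Fin n) :=
  (match o with | some (true, b) => some b | _ => none).toList

lemma tok_toggle (i : Fin n) (b : Bool) :
    tokU (some (!b, i)) ++ tokV (some (!b, i)) = tokU (some (b, i)) ++ tokV (some (b, i)) := by
  cases b <;> simp [tokU, tokV]

lemma flatMap_congr' {α β : Type*} {l : List α} {f g : α → List β}
    (h : ∀ a ∈ l, f a = g a) : l.flatMap f = l.flatMap g := by
  induction l with
  | nil => rfl
  | cons a t ih =>
      simp only [List.flatMap_cons]
      rw [h a (by simp), ih (fun x hx => h x (by simp [hx]))]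

lemma filterMap_single {α β : Type*} (f : α → Option β) (x : α) :
    List.filterMap f [x] = (f x).toList := by
  cases h : f x <;> simp [List.filterMap_cons, h]

lemma natOrd_refl (x : Letter n) : natOrd n x x := by
  exact Or.inr ⟨rfl, x.1.eq_false_or_eq_true⟩

lemma natOrd_true_left {a : Fin n} {y : Letter n} (h : natOrd n (false, a) y) :
    natOrd n (true, a) y := by
  rcases h with h | ⟨h, -⟩
  · exact Or.inl h
  · exact Or.inr ⟨h, Or.inl rfl⟩

lemma natOrd_false_right {x : Letter n} {a : Fin n} (h : natOrd n x (true, a)) :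
    natOrd n x (false, a) := by
  rcases h with h | ⟨h, -⟩
  · exact Or.inl h
  · exact Or.inr ⟨h, Or.inr rfl⟩

lemma not_natOrd_fb (a : Fin n) : ¬ natOrd n (false, a) (true, a) := by
  rintro (h | ⟨-, h | h⟩) <;> simp at h

/-- Key word lemma: if two fillings agree off the southwest corner and the
corner tokens concatenate equally, the total words agree. -/
lemma wWord_toggle (ν : YoungDiagram) (hν : (0, 0) ∈ ν) (T T' : Filling n)
    (hagree : ∀ c : ℕ × ℕ, c ≠ (ν.colLen 0 - 1, 0) → T' c = T c)
    (htok : tokU (T' (ν.colLen 0 - 1, 0)) ++ tokV (T' (ν.colLen 0 - 1, 0)) =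
      tokU (T (ν.colLen 0 - 1, 0)) ++ tokV (T (ν.colLen 0 - 1, 0))) :
    wWord ν T' = wWord ν T := by
  set R := ν.colLen 0 - 1 with hR
  have hcol : ν.colLen 0 = R + 1 := by
    have : 0 < ν.colLen 0 := YoungDiagram.mem_iff_lt_colLen.mp hν
    omega
  have hc0 : (R, 0) ∈ ν := YoungDiagram.mem_iff_lt_colLen.mpr (by omega)
  obtain ⟨k, hk⟩ : ∃ k, ν.rowLen R = k + 1 := by
    have : 0 < ν.rowLen R := YoungDiagram.mem_iff_lt_rowLen.mp hc0
    exact ⟨ν.rowLen R - 1, by omega⟩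
  obtain ⟨m, hm⟩ : ∃ m, ν.rowLen 0 = m + 1 := by
    have : 0 < ν.rowLen 0 := YoungDiagram.mem_iff_lt_rowLen.mp hν
    exact ⟨ν.rowLen 0 - 1, by omega⟩
  -- decomposition of uWord
  have hu : ∀ S : Filling n, uWord ν S =
      ((List.range R).flatMap fun i =>
        (List.range (ν.rowLen i)).reverse.filterMap fun j =>
          match S (i, j) with | some (false, a) => some a | _ => none) ++
      (((List.map Nat.succ (List.range k)).reverse).filterMap fun j =>
          match S (R, j) with | some (false, a) => some a | _ => none) ++
      tokU (S (R, 0)) := by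
    intro S
    unfold uWord
    rw [hcol, List.range_succ, List.flatMap_append, List.flatMap_cons, List.flatMap_nil,
      List.append_nil, hk, List.range_succ_eq_map, List.reverse_cons, List.filterMap_append,
      filterMap_single, List.append_assoc]
    rfl
  -- decomposition of vWord
  have hv : ∀ S : Filling n, vWord ν S =
      tokV (S (R, 0)) ++
      ((List.range R).reverse.filterMap fun i =>
          match S (i, 0) with | some (true, b) => some b | _ => none) ++
      ((List.map Nat.succ (List.range m)).flatMap fun j =>
        (List.range (ν.colLen j)).reverse.filterMap fun i =>
          match S (i, j) with | some (true, b) => some b | _ => none) := by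
    intro S
    unfold vWord
    rw [hm, List.range_succ_eq_map, List.flatMap_cons, hcol, List.range_succ,
      List.reverse_append, List.reverse_singleton, List.singleton_append,
      List.filterMap_cons]
    cases hS : S (R, 0) with
    | none => simp [tokV, hS]
    | some x =>
        obtain ⟨b, a⟩ := x
        cases b <;> simp [tokV, hS, List.append_assoc]
  have h1 : ((List.range R).flatMap fun i =>
        (List.range (ν.rowLen i)).reverse.filterMap fun j =>
          match T' (i, j) with | some (false, a) => some a | _ => none) =
      ((List.range R).flatMap fun i =>
        (List.range (ν.rowLen i)).reverse.filterMap fun j =>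
          match T (i, j) with | some (false, a) => some a | _ => none) := by
    refine flatMap_congr' fun i hi => List.filterMap_congr fun j hj => ?_
    rw [hagree (i, j) (by simp at hi; exact fun h => absurd (congrArg Prod.fst h) (by simp; omega))]
  have h2 : (((List.map Nat.succ (List.range k)).reverse).filterMap fun j =>
          match T' (R, j) with | some (false, a) => some a | _ => none) =
      (((List.map Nat.succ (List.range k)).reverse).filterMap fun j =>
          match T (R, j) with | some (false, a) => some a | _ => none) := by
    refine List.filterMap_congr fun j hj => ?_
    simp only [List.mem_reverse, List.mem_map] at hj
    obtain ⟨j', -, rfl⟩ := hj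
    rw [hagree (R, j'.succ) (by simp)]
  have h3 : ((List.range R).reverse.filterMap fun i =>
          match T' (i, 0) with | some (true, b) => some b | _ => none) =
      ((List.range R).reverse.filterMap fun i =>
          match T (i, 0) with | some (true, b) => some b | _ => none) := by
    refine List.filterMap_congr fun i hi => ?_
    simp only [List.mem_reverse, List.mem_range] at hi
    rw [hagree (i, 0) (by exact fun h => absurd (congrArg Prod.fst h) (by simp; omega))]
  have h4 : ((List.map Nat.succ (List.range m)).flatMap fun j =>
        (List.range (ν.colLen j)).reverse.filterMap fun i =>
          match T' (i, j) with | some (true, b) => some b | _ => none) =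
      ((List.map Nat.succ (List.range m)).flatMap fun j =>
        (List.range (ν.colLen j)).reverse.filterMap fun i =>
          match T (i, j) with | some (true, b) => some b | _ => none) := by
    refine flatMap_congr' fun j hj => List.filterMap_congr fun i hi => ?_
    simp only [List.mem_map] at hj
    obtain ⟨j', -, rfl⟩ := hj
    rw [hagree (i, j'.succ) (by simp)]
  unfold wWord
  rw [hu T, hu T', hv T, hv T', h1, h2, h3, h4]
  simp only [List.append_assoc]
  congr 2
  rw [← List.append_assoc, ← List.append_assoc, htok]
  simp [List.append_assoc]

end SWToggle
/-- For the natural order, toggling the bar on the entry in the southwest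
corner of a colored tableau (the box in the leftmost column of the bottom row) yields again
a colored tableau with the same total reverse reading word. -/
theorem southwest_corner_toggle {n : ℕ} (ν : YoungDiagram) (hν : (0, 0) ∈ ν)
    (T : Filling n) (hT : IsColoredTableau (natOrd n) ν T) :
    (∀ i : Fin n, T (ν.colLen 0 - 1, 0) = some (false, i) →
      IsColoredTableau (natOrd n) ν (Function.update T (ν.colLen 0 - 1, 0) (some (true, i))) ∧
      wWord ν (Function.update T (ν.colLen 0 - 1, 0) (some (true, i))) = wWord ν T) ∧
    (∀ i : Fin n, T (ν.colLen 0 - 1, 0) = some (true, i) →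
      IsColoredTableau (natOrd n) ν (Function.update T (ν.colLen 0 - 1, 0) (some (false, i))) ∧
      wWord ν (Function.update T (ν.colLen 0 - 1, 0) (some (false, i))) = wWord ν T) := by
  obtain ⟨hdom, hrow, hcolm, hucol, hbrow⟩ := hT
  set R := ν.colLen 0 - 1 with hRdef
  have hcolL : ν.colLen 0 = R + 1 := by
    have : 0 < ν.colLen 0 := YoungDiagram.mem_iff_lt_colLen.mp hν
    omega
  have hc0 : ((R, 0) : ℕ × ℕ) ∈ ν := YoungDiagram.mem_iff_lt_colLen.mpr (by omega)
  have hmemle : ∀ i₁ : ℕ, ∀ x : Letter n, T (i₁, 0) = some x → i₁ ≤ R := by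
    intro i₁ x hx
    have h1 : ((i₁, 0) : ℕ × ℕ) ∈ ν := (hdom _).mp (by simp [hx])
    have := YoungDiagram.mem_iff_lt_colLen.mp h1
    omega
  have hword : ∀ (b : Bool) (ℓ : Fin n), T (R, 0) = some (b, ℓ) →
      wWord ν (Function.update T (R, 0) (some (!b, ℓ))) = wWord ν T := by
    intro b ℓ hTc
    refine SWToggle.wWord_toggle ν hν T _ (fun c hc => Function.update_of_ne hc _ _) ?_
    rw [Function.update_self, hTc]
    exact SWToggle.tok_toggle ℓ b
  constructor
  · -- unbarred to barred
    intro ℓ hTc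
    refine ⟨⟨?_, ?_, ?_, ?_, ?_⟩, by simpa using hword false ℓ hTc⟩
    · intro c
      rw [Function.update_apply]
      split_ifs with h
      · subst h; simpa using hc0
      · exact hdom c
    · intro r j₁ j₂ x y hj hx hy
      by_cases h1 : ((r, j₁) : ℕ × ℕ) = (R, 0) <;>
        by_cases h2 : ((r, j₂) : ℕ × ℕ) = (R, 0)
      · rw [h1, Function.update_self] at hx
        rw [h2, Function.update_self] at hy
        injection hx with hx; injection hy with hy; subst hx; subst hy
        exact SWToggle.natOrd_refl _
      · rw [h1, Function.update_self] at hx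
        injection hx with hx; subst hx
        rw [Function.update_of_ne h2] at hy
        rw [Prod.mk.injEq] at h1
        obtain ⟨rfl, rfl⟩ := h1
        exact SWToggle.natOrd_true_left (hrow R 0 j₂ _ y (Nat.zero_le _) hTc hy)
      · rw [Prod.mk.injEq] at h2
        obtain ⟨rfl, rfl⟩ := h2
        exact absurd (by simpa using Nat.le_zero.mp hj) h1
      · rw [Function.update_of_ne h1] at hx
        rw [Function.update_of_ne h2] at hy
        exact hrow r j₁ j₂ x y hj hx hy
    · intro i₁ i₂ j x y hle hx hy
      by_cases h1 : ((i₁, j) : ℕ × ℕ) = (R, 0) <;>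
        by_cases h2 : ((i₂, j) : ℕ × ℕ) = (R, 0)
      · rw [h1, Function.update_self] at hx
        rw [h2, Function.update_self] at hy
        injection hx with hx; injection hy with hy; subst hx; subst hy
        exact SWToggle.natOrd_refl _
      · rw [Prod.mk.injEq] at h1
        obtain ⟨rfl, rfl⟩ := h1
        rw [Function.update_of_ne h2] at hy
        have hle2 := hmemle i₂ y hy
        exact absurd (by rw [Prod.mk.injEq]; exact ⟨le_antisymm hle2 hle, rfl⟩) h2
      · rw [Prod.mk.injEq] at h2
        obtain ⟨rfl, rfl⟩ := h2
        rw [Function.update_of_ne h1] at hx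
        rw [Function.update_self] at hy
        injection hy with hy; subst hy
        have hord : natOrd n x (false, ℓ) := hcolm i₁ R 0 x _ hle hx hTc
        rcases hord with h | ⟨h, -⟩
        · exact Or.inl h
        · rcases Bool.eq_false_or_eq_true x.1 with hb | hb
          · exact Or.inr ⟨h, Or.inl hb⟩
          · have hxe : x = (false, ℓ) := Prod.ext hb h
            rw [hxe] at hx
            have hne : i₁ ≠ R := fun he => h1 (by rw [Prod.mk.injEq]; exact ⟨he, rfl⟩)
            exact absurd hTc (hucol i₁ R 0 ℓ hne hx)
      · rw [Function.update_of_ne h1] at hx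
        rw [Function.update_of_ne h2] at hy
        exact hcolm i₁ i₂ j x y hle hx hy
    · intro i₁ i₂ j a hne hx
      by_cases h1 : ((i₁, j) : ℕ × ℕ) = (R, 0)
      · rw [h1, Function.update_self] at hx
        exact absurd hx (by simp)
      · rw [Function.update_of_ne h1] at hx
        by_cases h2 : ((i₂, j) : ℕ × ℕ) = (R, 0)
        · rw [h2, Function.update_self]
          simp
        · rw [Function.update_of_ne h2]
          exact hucol i₁ i₂ j a hne hx
    · intro r j₁ j₂ b hne hx
      by_cases h1 : ((r, j₁) : ℕ × ℕ) = (R, 0) <;>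
        by_cases h2 : ((r, j₂) : ℕ × ℕ) = (R, 0)
      · rw [Prod.mk.injEq] at h1 h2
        exact absurd (h1.2.trans h2.2.symm) hne
      · rw [h1, Function.update_self] at hx
        injection hx with hx
        have hbe : b = ℓ := by have := congrArg Prod.snd hx; simpa using this.symm
        subst hbe
        rw [Prod.mk.injEq] at h1
        obtain ⟨rfl, rfl⟩ := h1
        rw [Function.update_of_ne h2]
        intro hy
        exact SWToggle.not_natOrd_fb b (hrow R 0 j₂ _ _ (Nat.zero_le _) hTc hy)
      · rw [Prod.mk.injEq] at h2
        obtain ⟨rfl, rfl⟩ := h2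
        rw [Function.update_of_ne h1] at hx
        rw [Function.update_self]
        intro hy
        injection hy with hy
        have hbe : b = ℓ := by have := congrArg Prod.snd hy; simpa using this.symm
        subst hbe
        exact SWToggle.not_natOrd_fb b (hrow R 0 j₁ _ _ (Nat.zero_le _) hTc hx)
      · rw [Function.update_of_ne h1] at hx
        rw [Function.update_of_ne h2]
        exact hbrow r j₁ j₂ b hne hx
  · -- barred to unbarred
    intro ℓ hTc
    refine ⟨⟨?_, ?_, ?_, ?_, ?_⟩, by simpa using hword true ℓ hTc⟩
    · intro c
      rw [Function.update_apply]
      split_ifs with h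
      · subst h; simpa using hc0
      · exact hdom c
    · intro r j₁ j₂ x y hj hx hy
      by_cases h1 : ((r, j₁) : ℕ × ℕ) = (R, 0) <;>
        by_cases h2 : ((r, j₂) : ℕ × ℕ) = (R, 0)
      · rw [h1, Function.update_self] at hx
        rw [h2, Function.update_self] at hy
        injection hx with hx; injection hy with hy; subst hx; subst hy
        exact SWToggle.natOrd_refl _
      · rw [h1, Function.update_self] at hx
        injection hx with hx; subst hx
        rw [Function.update_of_ne h2] at hy
        rw [Prod.mk.injEq] at h1
        obtain ⟨rfl, rfl⟩ := h1
        have hord : natOrd n (true, ℓ) y := hrow R 0 j₂ _ y (Nat.zero_le _) hTc hy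
        rcases hord with h | ⟨h, -⟩
        · exact Or.inl h
        · rcases Bool.eq_false_or_eq_true y.1 with hb | hb
          · have hye : y = (true, ℓ) := Prod.ext hb h.symm
            rw [hye] at hy
            have hne2 : (0 : ℕ) ≠ j₂ := fun he =>
              h2 (by rw [Prod.mk.injEq]; exact ⟨rfl, he.symm⟩)
            exact absurd hy (hbrow R 0 j₂ ℓ hne2 hTc)
          · exact Or.inr ⟨h, Or.inr hb⟩
      · rw [Prod.mk.injEq] at h2
        obtain ⟨rfl, rfl⟩ := h2
        exact absurd (by simpa using Nat.le_zero.mp hj) h1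
      · rw [Function.update_of_ne h1] at hx
        rw [Function.update_of_ne h2] at hy
        exact hrow r j₁ j₂ x y hj hx hy
    · intro i₁ i₂ j x y hle hx hy
      by_cases h1 : ((i₁, j) : ℕ × ℕ) = (R, 0) <;>
        by_cases h2 : ((i₂, j) : ℕ × ℕ) = (R, 0)
      · rw [h1, Function.update_self] at hx
        rw [h2, Function.update_self] at hy
        injection hx with hx; injection hy with hy; subst hx; subst hy
        exact SWToggle.natOrd_refl _
      · rw [Prod.mk.injEq] at h1
        obtain ⟨rfl, rfl⟩ := h1
        rw [Function.update_of_ne h2] at hy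
        have hle2 := hmemle i₂ y hy
        exact absurd (by rw [Prod.mk.injEq]; exact ⟨le_antisymm hle2 hle, rfl⟩) h2
      · rw [Prod.mk.injEq] at h2
        obtain ⟨rfl, rfl⟩ := h2
        rw [Function.update_of_ne h1] at hx
        rw [Function.update_self] at hy
        injection hy with hy; subst hy
        exact SWToggle.natOrd_false_right (hcolm i₁ R 0 x _ hle hx hTc)
      · rw [Function.update_of_ne h1] at hx
        rw [Function.update_of_ne h2] at hy
        exact hcolm i₁ i₂ j x y hle hx hy
    · intro i₁ i₂ j a hne hx
      by_cases h1 : ((i₁, j) : ℕ × ℕ) = (R, 0) <;>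
        by_cases h2 : ((i₂, j) : ℕ × ℕ) = (R, 0)
      · rw [Prod.mk.injEq] at h1 h2
        exact absurd (h1.1.trans h2.1.symm) hne
      · rw [h1, Function.update_self] at hx
        injection hx with hx
        have hae : a = ℓ := by have := congrArg Prod.snd hx; simpa using this.symm
        subst hae
        rw [Prod.mk.injEq] at h1
        obtain ⟨rfl, rfl⟩ := h1
        rw [Function.update_of_ne h2]
        intro hy
        have hle2 := hmemle i₂ _ hy
        have hne2 : i₂ ≠ R := fun he => h2 (by rw [Prod.mk.injEq]; exact ⟨he, rfl⟩)
        exact SWToggle.not_natOrd_fb a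
          (hcolm i₂ R 0 _ _ (by omega) hy hTc)
      · rw [Prod.mk.injEq] at h2
        obtain ⟨rfl, rfl⟩ := h2
        rw [Function.update_of_ne h1] at hx
        rw [Function.update_self]
        intro hy
        injection hy with hy
        have hae : a = ℓ := by have := congrArg Prod.snd hy; simpa using this.symm
        subst hae
        have hle2 := hmemle i₁ _ hx
        have hne2 : i₁ ≠ R := fun he => h1 (by rw [Prod.mk.injEq]; exact ⟨he, rfl⟩)
        exact SWToggle.not_natOrd_fb a (hcolm i₁ R 0 _ _ (by omega) hx hTc)
      · rw [Function.update_of_ne h1] at hx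
        rw [Function.update_of_ne h2]
        exact hucol i₁ i₂ j a hne hx
    · intro r j₁ j₂ b hne hx
      by_cases h1 : ((r, j₁) : ℕ × ℕ) = (R, 0)
      · rw [h1, Function.update_self] at hx
        exact absurd hx (by simp)
      · rw [Function.update_of_ne h1] at hx
        by_cases h2 : ((r, j₂) : ℕ × ℕ) = (R, 0)
        · rw [h2, Function.update_self]
          simp
        · rw [Function.update_of_ne h2]
          exact hbrow r j₁ j₂ b hne hx
end

section
/- Let < be the natural order 1̄<1<2̄<2<⋯<n̄<n on 𝒜ₙ, let λ and ν be partitions of n, and let d ≥ 1. Then the number of colored tableaux of shape ν with respect to <, with content λ and total color d, whose total reverse reading word is a ballot sequence and whose southwest corner contains a barred letter, equals the number of colored tableaux of shape ν with respect to <, with content λ and total color d−1, whose total reverse reading word is a ballot sequence and whose southwest corner contains an unbarred letter. -/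
open scoped Classical

section SwFlipAux

open List

variable {n : ℕ}

lemma natOrd_refl (x : Letter n) : natOrd n x x := by
  rcases x with ⟨b, i⟩; cases b <;> simp [natOrd]

lemma natOrd_bar_unbar (k : Fin n) : natOrd n (true, k) (false, k) := by
  simp [natOrd]

lemma not_natOrd_unbar_bar (k : Fin n) : ¬ natOrd n (false, k) (true, k) := by
  simp [natOrd]

lemma natOrd_of_le_bar {x : Letter n} {k : Fin n} (h : natOrd n x (true, k)) :
    natOrd n x (false, k) := by
  rcases h with h | ⟨h, -⟩
  · exact Or.inl h
  · exact Or.inr ⟨h, Or.inr rfl⟩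

lemma natOrd_of_unbar_le {y : Letter n} {k : Fin n} (h : natOrd n (false, k) y) :
    natOrd n (true, k) y := by
  rcases h with h | ⟨h, -⟩
  · exact Or.inl h
  · exact Or.inr ⟨h, Or.inl rfl⟩

lemma natOrd_of_bar_le {y : Letter n} {k : Fin n} (h : natOrd n (true, k) y)
    (hne : y ≠ (true, k)) : natOrd n (false, k) y := by
  obtain ⟨b, j⟩ := y
  rcases h with h | ⟨h, -⟩
  · exact Or.inl h
  · simp only at h
    subst h
    cases b
    · exact Or.inr ⟨rfl, Or.inr rfl⟩
    · exact absurd rfl hne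

lemma natOrd_unbar_of_le {x : Letter n} {k : Fin n} (h : natOrd n x (false, k))
    (hne : x ≠ (false, k)) : natOrd n x (true, k) := by
  obtain ⟨b, j⟩ := x
  rcases h with h | ⟨h, -⟩
  · exact Or.inl h
  · simp only at h
    subst h
    cases b
    · exact absurd rfl hne
    · exact Or.inr ⟨rfl, Or.inl rfl⟩

/-- Flip the bar of the southwest-corner letter. -/
def swFlip (ν : YoungDiagram) (T : Filling n) : Filling n :=
  fun c => if c = (ν.colLen 0 - 1, 0) then (T c).map (fun x => (!x.1, x.2)) else T c

lemma swFlip_swFlip (ν : YoungDiagram) (T : Filling n) : swFlip ν (swFlip ν T) = T := by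
  funext c
  unfold swFlip
  by_cases h : c = (ν.colLen 0 - 1, 0)
  · simp only [if_pos h, Option.map_map]
    cases T c <;> simp [Function.comp]
  · simp only [if_neg h]

lemma swFlip_involutive (ν : YoungDiagram) : Function.Involutive (swFlip (n := n) ν) :=
  swFlip_swFlip ν

lemma swFlip_apply_corner (ν : YoungDiagram) (T : Filling n) {b : Bool} {k : Fin n}
    (hc : T (ν.colLen 0 - 1, 0) = some (b, k)) :
    swFlip ν T (ν.colLen 0 - 1, 0) = some (!b, k) := by
  simp [swFlip, hc]

lemma swFlip_apply_ne (ν : YoungDiagram) (T : Filling n) {c : ℕ × ℕ}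
    (hc : c ≠ (ν.colLen 0 - 1, 0)) : swFlip ν T c = T c := if_neg hc

end SwFlipAux
section SwFlipTab

variable {n : ℕ} {ν : YoungDiagram}

lemma corner_mem (h0 : (0, 0) ∈ ν) : ((ν.colLen 0 - 1 : ℕ), (0 : ℕ)) ∈ ν := by
  rw [YoungDiagram.mem_iff_lt_colLen]
  have : 0 < ν.colLen 0 := YoungDiagram.mem_iff_lt_colLen.mp h0
  omega

lemma mem_col0 (h0 : (0, 0) ∈ ν) {i : ℕ} (hi : ((i : ℕ), (0 : ℕ)) ∈ ν) :
    i ≤ ν.colLen 0 - 1 := by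
  rw [YoungDiagram.mem_iff_lt_colLen] at hi
  have : 0 < ν.colLen 0 := YoungDiagram.mem_iff_lt_colLen.mp h0
  omega

lemma swFlip_isColoredTableau (h0 : (0, 0) ∈ ν) {T : Filling n}
    (hT : IsColoredTableau (natOrd n) ν T) {b : Bool} {k : Fin n}
    (hc : T (ν.colLen 0 - 1, 0) = some (b, k)) :
    IsColoredTableau (natOrd n) ν (swFlip ν T) := by
  obtain ⟨hsome, hrow, hcolm, hubar, hbar⟩ := hT
  have hflipc := swFlip_apply_corner ν T hc
  refine ⟨?_, ?_, ?_, ?_, ?_⟩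
  · intro c
    by_cases h : c = (ν.colLen 0 - 1, 0)
    · subst h
      rw [hflipc]
      simpa using corner_mem h0
    · rw [swFlip_apply_ne ν T h]
      exact hsome c
  · -- rows
    intro i j₁ j₂ x y hj hx hy
    by_cases hi : i = ν.colLen 0 - 1
    · subst hi
      by_cases h1 : j₁ = 0
      · subst h1
        by_cases h2 : j₂ = 0
        · subst h2
          rw [hflipc] at hx hy
          obtain rfl := Option.some.inj hx
          obtain rfl := Option.some.inj hy
          exact natOrd_refl _
        · rw [hflipc] at hx
          obtain rfl := Option.some.inj hx
          rw [swFlip_apply_ne ν T (by simp [h2])] at hy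
          have base : natOrd n (b, k) y := hrow _ 0 j₂ _ y (Nat.zero_le _) hc hy
          cases b
          · exact natOrd_of_unbar_le base
          · refine natOrd_of_bar_le base ?_
            intro hyk
            exact hbar _ 0 j₂ k (Ne.symm h2) hc (by rw [hy, hyk])
      · have h2 : j₂ ≠ 0 := by omega
        rw [swFlip_apply_ne ν T (by simp [h1])] at hx
        rw [swFlip_apply_ne ν T (by simp [h2])] at hy
        exact hrow _ j₁ j₂ x y hj hx hy
    · rw [swFlip_apply_ne ν T (by simp [hi])] at hx
      rw [swFlip_apply_ne ν T (by simp [hi])] at hy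
      exact hrow i j₁ j₂ x y hj hx hy
  · -- columns
    intro i₁ i₂ j x y hij hx hy
    by_cases hj : j = 0
    · subst hj
      by_cases h2 : i₂ = ν.colLen 0 - 1
      · subst h2
        by_cases h1 : i₁ = ν.colLen 0 - 1
        · subst h1
          rw [hflipc] at hx hy
          obtain rfl := Option.some.inj hx
          obtain rfl := Option.some.inj hy
          exact natOrd_refl _
        · rw [hflipc] at hy
          obtain rfl := Option.some.inj hy
          rw [swFlip_apply_ne ν T (by simp [h1])] at hx
          have base : natOrd n x (b, k) := hcolm i₁ _ 0 x _ hij hx hc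
          cases b
          · refine natOrd_unbar_of_le base ?_
            intro hxk
            exact hubar i₁ _ 0 k h1 (by rw [hx, hxk]) hc
          · exact natOrd_of_le_bar base
      · have h1 : i₁ ≠ ν.colLen 0 - 1 := by
          intro h1
          rw [swFlip_apply_ne ν T (by simp [h2])] at hy
          have hmem : ((i₂ : ℕ), (0 : ℕ)) ∈ ν := (hsome (i₂, 0)).mp (by simp [hy])
          have := mem_col0 h0 hmem
          omega
        rw [swFlip_apply_ne ν T (by simp [h1])] at hx
        rw [swFlip_apply_ne ν T (by simp [h2])] at hy
        exact hcolm i₁ i₂ 0 x y hij hx hy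
    · rw [swFlip_apply_ne ν T (by simp [hj])] at hx
      rw [swFlip_apply_ne ν T (by simp [hj])] at hy
      exact hcolm i₁ i₂ j x y hij hx hy
  · -- no two identical unbarred in a column
    intro i₁ i₂ j a hne12 hx hy
    by_cases hc1 : ((i₁ : ℕ), (j : ℕ)) = (ν.colLen 0 - 1, 0)
    · rw [Prod.mk.injEq] at hc1
      obtain ⟨hi1, hj0⟩ := hc1
      subst hi1; subst hj0
      rw [hflipc] at hx
      have hx' := Option.some.inj hx
      rw [Prod.mk.injEq] at hx'
      obtain ⟨hb, hk⟩ := hx'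
      have hb' : b = true := by simpa using hb
      subst hb'; subst hk
      rw [swFlip_apply_ne ν T (by simp [Ne.symm hne12])] at hy
      have hmem : ((i₂ : ℕ), (0 : ℕ)) ∈ ν := (hsome (i₂, 0)).mp (by simp [hy])
      have hle : i₂ ≤ ν.colLen 0 - 1 := mem_col0 h0 hmem
      have := hcolm i₂ _ 0 _ _ hle hy hc
      exact not_natOrd_unbar_bar _ this
    · by_cases hc2 : ((i₂ : ℕ), (j : ℕ)) = (ν.colLen 0 - 1, 0)
      · rw [Prod.mk.injEq] at hc2
        obtain ⟨hi2, hj0⟩ := hc2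
        subst hi2; subst hj0
        rw [hflipc] at hy
        have hy' := Option.some.inj hy
        rw [Prod.mk.injEq] at hy'
        obtain ⟨hb, hk⟩ := hy'
        have hb' : b = true := by simpa using hb
        subst hb'; subst hk
        rw [swFlip_apply_ne ν T hc1] at hx
        have hmem : ((i₁ : ℕ), (0 : ℕ)) ∈ ν := (hsome (i₁, 0)).mp (by simp [hx])
        have hle : i₁ ≤ ν.colLen 0 - 1 := mem_col0 h0 hmem
        have := hcolm i₁ _ 0 _ _ hle hx hc
        exact not_natOrd_unbar_bar _ this
      · rw [swFlip_apply_ne ν T hc1] at hx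
        rw [swFlip_apply_ne ν T hc2] at hy
        exact hubar i₁ i₂ j a hne12 hx hy
  · -- no two identical barred in a row
    intro i j₁ j₂ bb hnej hx hy
    by_cases hc1 : ((i : ℕ), (j₁ : ℕ)) = (ν.colLen 0 - 1, 0)
    · rw [Prod.mk.injEq] at hc1
      obtain ⟨hi1, hj0⟩ := hc1
      subst hi1; subst hj0
      rw [hflipc] at hx
      have hx' := Option.some.inj hx
      rw [Prod.mk.injEq] at hx'
      obtain ⟨hb, hk⟩ := hx'
      have hb' : b = false := by simpa using hb
      subst hb'; subst hk
      rw [swFlip_apply_ne ν T (by simp [Ne.symm hnej])] at hy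
      have := hrow _ 0 j₂ _ _ (Nat.zero_le _) hc hy
      exact not_natOrd_unbar_bar _ this
    · by_cases hc2 : ((i : ℕ), (j₂ : ℕ)) = (ν.colLen 0 - 1, 0)
      · rw [Prod.mk.injEq] at hc2
        obtain ⟨hi2, hj0⟩ := hc2
        subst hi2; subst hj0
        rw [hflipc] at hy
        have hy' := Option.some.inj hy
        rw [Prod.mk.injEq] at hy'
        obtain ⟨hb, hk⟩ := hy'
        have hb' : b = false := by simpa using hb
        subst hb'; subst hk
        rw [swFlip_apply_ne ν T hc1] at hx
        have := hrow _ 0 j₁ _ _ (Nat.zero_le _) hc hx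
        exact not_natOrd_unbar_bar _ this
      · rw [swFlip_apply_ne ν T hc1] at hx
        rw [swFlip_apply_ne ν T hc2] at hy
        exact hbar i j₁ j₂ bb hnej hx hy

end SwFlipTab
section SwFlipWord

open List

variable {n : ℕ} {ν : YoungDiagram}

lemma flatMap_congr' {α β : Type*} {l : List α} {f g : α → List β}
    (h : ∀ a ∈ l, f a = g a) : l.flatMap f = l.flatMap g := by
  induction l with
  | nil => rfl
  | cons a l ih =>
      simp only [List.flatMap_cons]
      rw [h a (List.mem_cons_self), ih fun x hx => h x (List.mem_cons_of_mem a hx)]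

lemma uWord_swFlip (h0 : (0, 0) ∈ ν) {T : Filling n} {k : Fin n}
    (hc : T (ν.colLen 0 - 1, 0) = some (true, k)) :
    uWord ν (swFlip ν T) = uWord ν T ++ [k] := by
  have hflipc := swFlip_apply_corner ν T hc
  have hcl : ν.colLen 0 = (ν.colLen 0 - 1) + 1 :=
    (Nat.succ_pred_eq_of_pos (YoungDiagram.mem_iff_lt_colLen.mp h0)).symm
  have hrl : ν.rowLen (ν.colLen 0 - 1) = (ν.rowLen (ν.colLen 0 - 1) - 1) + 1 :=
    (Nat.succ_pred_eq_of_pos (YoungDiagram.mem_iff_lt_rowLen.mp (corner_mem h0))).symm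
  unfold uWord
  rw [hcl, List.range_succ, List.flatMap_append, List.flatMap_append,
    List.flatMap_cons, List.flatMap_cons, List.flatMap_nil, List.flatMap_nil]
  have hA : (List.range (ν.colLen 0 - 1)).flatMap
        (fun i => (List.range (ν.rowLen i)).reverse.filterMap fun j =>
          match swFlip ν T (i, j) with
          | some (false, a) => some a
          | _ => none) =
      (List.range (ν.colLen 0 - 1)).flatMap
        (fun i => (List.range (ν.rowLen i)).reverse.filterMap fun j =>
          match T (i, j) with
          | some (false, a) => some a
          | _ => none) := by
    refine flatMap_congr' fun i hi => ?_
    refine List.filterMap_congr fun j hj => ?_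
    rw [swFlip_apply_ne ν T]
    intro hcc
    rw [Prod.mk.injEq] at hcc
    exact absurd hcc.1 (by have := List.mem_range.mp hi; omega)
  rw [hA]
  have hB : ((List.range (ν.rowLen (ν.colLen 0 - 1))).reverse.filterMap fun j =>
        match swFlip ν T (ν.colLen 0 - 1, j) with
        | some (false, a) => some a
        | _ => none) =
      ((List.range (ν.rowLen (ν.colLen 0 - 1))).reverse.filterMap fun j =>
        match T (ν.colLen 0 - 1, j) with
        | some (false, a) => some a
        | _ => none) ++ [k] := by
    rw [hrl, List.range_succ_eq_map, List.reverse_cons, List.filterMap_append,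
      List.filterMap_append]
    have htail : ((List.map Nat.succ (List.range (ν.rowLen (ν.colLen 0 - 1) - 1))).reverse.filterMap
          fun j => match swFlip ν T (ν.colLen 0 - 1, j) with
          | some (false, a) => some a
          | _ => none) =
        ((List.map Nat.succ (List.range (ν.rowLen (ν.colLen 0 - 1) - 1))).reverse.filterMap
          fun j => match T (ν.colLen 0 - 1, j) with
          | some (false, a) => some a
          | _ => none) := by
      refine List.filterMap_congr fun j hj => ?_
      rw [swFlip_apply_ne ν T]
      intro hcc
      rw [Prod.mk.injEq] at hcc
      rw [List.mem_reverse, List.mem_map] at hj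
      obtain ⟨j', -, rfl⟩ := hj
      exact Nat.succ_ne_zero j' hcc.2
    rw [htail]
    simp only [List.filterMap_cons, List.filterMap_nil]
    rw [hc, hflipc]
    simp
  rw [hB]
  simp

lemma vWord_swFlip (h0 : (0, 0) ∈ ν) {T : Filling n} {k : Fin n}
    (hc : T (ν.colLen 0 - 1, 0) = some (true, k)) :
    vWord ν T = k :: vWord ν (swFlip ν T) := by
  have hflipc := swFlip_apply_corner ν T hc
  have hcl : ν.colLen 0 = (ν.colLen 0 - 1) + 1 :=
    (Nat.succ_pred_eq_of_pos (YoungDiagram.mem_iff_lt_colLen.mp h0)).symm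
  have hrl0 : ν.rowLen 0 = (ν.rowLen 0 - 1) + 1 :=
    (Nat.succ_pred_eq_of_pos (YoungDiagram.mem_iff_lt_rowLen.mp h0)).symm
  unfold vWord
  rw [hrl0, List.range_succ_eq_map, List.flatMap_cons, List.flatMap_cons]
  have htail : (List.map Nat.succ (List.range (ν.rowLen 0 - 1))).flatMap
        (fun j => (List.range (ν.colLen j)).reverse.filterMap fun i =>
          match T (i, j) with
          | some (true, b) => some b
          | _ => none) =
      (List.map Nat.succ (List.range (ν.rowLen 0 - 1))).flatMap
        (fun j => (List.range (ν.colLen j)).reverse.filterMap fun i =>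
          match swFlip ν T (i, j) with
          | some (true, b) => some b
          | _ => none) := by
    refine flatMap_congr' fun j hj => ?_
    refine List.filterMap_congr fun i hi => ?_
    rw [List.mem_map] at hj
    obtain ⟨j', -, rfl⟩ := hj
    rw [swFlip_apply_ne ν T]
    intro hcc
    rw [Prod.mk.injEq] at hcc
    exact Nat.succ_ne_zero j' hcc.2
  rw [htail]
  have hhead : ((List.range (ν.colLen 0)).reverse.filterMap fun i =>
        match T (i, 0) with
        | some (true, b) => some b
        | _ => none) =
      k :: ((List.range (ν.colLen 0)).reverse.filterMap fun i =>
        match swFlip ν T (i, 0) with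
        | some (true, b) => some b
        | _ => none) := by
    rw [hcl, List.range_succ, List.reverse_append]
    have htail2 : ((List.range (ν.colLen 0 - 1)).reverse.filterMap fun i =>
          match T (i, 0) with
          | some (true, b) => some b
          | _ => none) =
        ((List.range (ν.colLen 0 - 1)).reverse.filterMap fun i =>
          match swFlip ν T (i, 0) with
          | some (true, b) => some b
          | _ => none) := by
      refine List.filterMap_congr fun i hi => ?_
      rw [List.mem_reverse, List.mem_range] at hi
      rw [swFlip_apply_ne ν T]
      intro hcc
      rw [Prod.mk.injEq] at hcc
      omega
    simp only [List.reverse_singleton, List.singleton_append, List.filterMap_cons]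
    rw [hc, hflipc]
    simp only [Bool.not_true]
    rw [htail2]
  rw [hhead]
  simp

lemma wWord_swFlip (h0 : (0, 0) ∈ ν) {T : Filling n} {k : Fin n}
    (hc : T (ν.colLen 0 - 1, 0) = some (true, k)) :
    wWord ν (swFlip ν T) = wWord ν T := by
  unfold wWord
  rw [uWord_swFlip h0 hc, vWord_swFlip h0 hc, List.append_assoc, List.singleton_append]

end SwFlipWord
section SwFlipCount

variable {n : ℕ} {ν : YoungDiagram}

lemma totalContent_swFlip {T : Filling n} {b : Bool} {k : Fin n}
    (hc : T (ν.colLen 0 - 1, 0) = some (b, k)) (i : Fin n) :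
    totalContent ν (swFlip ν T) i = totalContent ν T i := by
  have hflipc := swFlip_apply_corner ν T hc
  unfold totalContent
  congr 1
  refine Finset.filter_congr fun c _ => ?_
  by_cases h : c = (ν.colLen 0 - 1, 0)
  · subst h
    rw [hflipc, hc]
    cases b <;> simp [Prod.ext_iff]
  · rw [swFlip_apply_ne ν T h]

lemma totalColor_swFlip (h0 : (0, 0) ∈ ν) {T : Filling n} {k : Fin n}
    (hc : T (ν.colLen 0 - 1, 0) = some (true, k)) :
    totalColor ν T = totalColor ν (swFlip ν T) + 1 := by
  have hflipc := swFlip_apply_corner ν T hc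
  unfold totalColor
  have h1 : Finset.filter (fun c => (T c).map Prod.fst = some true) ν.cells
      = insert (ν.colLen 0 - 1, 0)
        (Finset.filter (fun c => ((swFlip ν T) c).map Prod.fst = some true) ν.cells) := by
    ext c
    by_cases h : c = (ν.colLen 0 - 1, 0)
    · subst h
      simp only [Finset.mem_insert, Finset.mem_filter, hc, hflipc]
      simp [YoungDiagram.mem_cells, corner_mem h0]
    · rw [Finset.mem_insert, Finset.mem_filter, Finset.mem_filter,
        swFlip_apply_ne ν T h]
      simp [h]
  rw [h1, Finset.card_insert_of_notMem]
  simp [Finset.mem_filter, hflipc]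

end SwFlipCount
section MainAux

variable {n : ℕ} {ν : YoungDiagram}

lemma swFlip_mem_forward (h0 : (0, 0) ∈ ν) {d : ℕ} (hd : 1 ≤ d) (lam : Fin n → ℕ)
    {T : Filling n}
    (hT : IsColoredTableau (natOrd n) ν T ∧ (∀ i, totalContent ν T i = lam i) ∧
      totalColor ν T = d ∧ IsBallot (wWord ν T) ∧
      (T (ν.colLen 0 - 1, 0)).map Prod.fst = some true) :
    IsColoredTableau (natOrd n) ν (swFlip ν T) ∧
      (∀ i, totalContent ν (swFlip ν T) i = lam i) ∧
      totalColor ν (swFlip ν T) = d - 1 ∧ IsBallot (wWord ν (swFlip ν T)) ∧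
      ((swFlip ν T) (ν.colLen 0 - 1, 0)).map Prod.fst = some false := by
  obtain ⟨htab, hcont, hcolor, hballot, hcorner⟩ := hT
  obtain ⟨⟨b, k⟩, hx, hb⟩ := Option.map_eq_some_iff.mp hcorner
  simp only at hb
  subst hb
  have hflipc := swFlip_apply_corner ν T hx
  refine ⟨swFlip_isColoredTableau h0 htab hx, ?_, ?_, ?_, ?_⟩
  · intro i; rw [totalContent_swFlip hx]; exact hcont i
  · have := totalColor_swFlip h0 hx
    omega
  · rw [wWord_swFlip h0 hx]; exact hballot
  · rw [hflipc]; rfl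

lemma swFlip_mem_backward (h0 : (0, 0) ∈ ν) {d : ℕ} (hd : 1 ≤ d) (lam : Fin n → ℕ)
    {T : Filling n}
    (hT : IsColoredTableau (natOrd n) ν T ∧ (∀ i, totalContent ν T i = lam i) ∧
      totalColor ν T = d - 1 ∧ IsBallot (wWord ν T) ∧
      (T (ν.colLen 0 - 1, 0)).map Prod.fst = some false) :
    IsColoredTableau (natOrd n) ν (swFlip ν T) ∧
      (∀ i, totalContent ν (swFlip ν T) i = lam i) ∧
      totalColor ν (swFlip ν T) = d ∧ IsBallot (wWord ν (swFlip ν T)) ∧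
      ((swFlip ν T) (ν.colLen 0 - 1, 0)).map Prod.fst = some true := by
  obtain ⟨htab, hcont, hcolor, hballot, hcorner⟩ := hT
  obtain ⟨⟨b, k⟩, hx, hb⟩ := Option.map_eq_some_iff.mp hcorner
  simp only at hb
  subst hb
  have hflipc := swFlip_apply_corner ν T hx
  simp only [Bool.not_false] at hflipc
  have hww : wWord ν (swFlip ν (swFlip ν T)) = wWord ν (swFlip ν T) :=
    wWord_swFlip h0 hflipc
  rw [swFlip_swFlip] at hww
  have hcol2 : totalColor ν (swFlip ν T) = totalColor ν (swFlip ν (swFlip ν T)) + 1 :=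
    totalColor_swFlip h0 hflipc
  rw [swFlip_swFlip] at hcol2
  refine ⟨swFlip_isColoredTableau h0 htab hx, ?_, ?_, ?_, ?_⟩
  · intro i; rw [totalContent_swFlip hx]; exact hcont i
  · omega
  · rw [← hww]; exact hballot
  · rw [hflipc]; rfl

end MainAux
/-- For the natural order and `d ≥ 1`, the number of colored Yamanouchi
tableaux of shape `ν`, content `λ` and total color `d` with barred southwest corner equals
the number of colored Yamanouchi tableaux of shape `ν`, content `λ` and total color `d − 1`
with unbarred southwest corner. -/
theorem count_barred_corner_eq_count_unbarred_corner {n d : ℕ} (hd : 1 ≤ d)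
    (lam : Fin n → ℕ) (hlam : Antitone lam) (hsum : ∑ i, lam i = n)
    (ν : YoungDiagram) (hν : ν.card = n) :
    {T : Filling n | IsColoredTableau (natOrd n) ν T ∧
      (∀ i, totalContent ν T i = lam i) ∧ totalColor ν T = d ∧
      IsBallot (wWord ν T) ∧ (T (ν.colLen 0 - 1, 0)).map Prod.fst = some true}.ncard =
    {T : Filling n | IsColoredTableau (natOrd n) ν T ∧
      (∀ i, totalContent ν T i = lam i) ∧ totalColor ν T = d - 1 ∧
      IsBallot (wWord ν T) ∧ (T (ν.colLen 0 - 1, 0)).map Prod.fst = some false}.ncard := by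
  by_cases h0 : (0, 0) ∈ ν
  · have himg : {T : Filling n | IsColoredTableau (natOrd n) ν T ∧
        (∀ i, totalContent ν T i = lam i) ∧ totalColor ν T = d - 1 ∧
        IsBallot (wWord ν T) ∧ (T (ν.colLen 0 - 1, 0)).map Prod.fst = some false} =
      swFlip ν '' {T : Filling n | IsColoredTableau (natOrd n) ν T ∧
        (∀ i, totalContent ν T i = lam i) ∧ totalColor ν T = d ∧
        IsBallot (wWord ν T) ∧ (T (ν.colLen 0 - 1, 0)).map Prod.fst = some true} := by
      ext T'
      constructor
      · intro hT'
        exact ⟨swFlip ν T', swFlip_mem_backward h0 hd lam hT', swFlip_swFlip ν T'⟩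
      · rintro ⟨T, hT, rfl⟩
        exact swFlip_mem_forward h0 hd lam hT
    rw [himg, Set.ncard_image_of_injective _ (swFlip_involutive ν).injective]
  · have hnc : ∀ (T : Filling n) (x : Bool), IsColoredTableau (natOrd n) ν T →
        (T (ν.colLen 0 - 1, 0)).map Prod.fst ≠ some x := by
      intro T x hT h
      have hs : (T (ν.colLen 0 - 1, 0)).isSome := by
        cases hTc : T (ν.colLen 0 - 1, 0) with
        | none => rw [hTc] at h; exact absurd h (by simp)
        | some y => rfl
      have hmem := (hT.1 _).mp hs
      exact h0 (ν.up_left_mem (Nat.zero_le _) (le_refl 0) hmem)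
    have e1 : {T : Filling n | IsColoredTableau (natOrd n) ν T ∧
        (∀ i, totalContent ν T i = lam i) ∧ totalColor ν T = d ∧
        IsBallot (wWord ν T) ∧ (T (ν.colLen 0 - 1, 0)).map Prod.fst = some true} = ∅ := by
      ext T; simp only [Set.mem_setOf_eq, Set.mem_empty_iff_false, iff_false]
      rintro ⟨h1, -, -, -, h5⟩; exact hnc T true h1 h5
    have e2 : {T : Filling n | IsColoredTableau (natOrd n) ν T ∧
        (∀ i, totalContent ν T i = lam i) ∧ totalColor ν T = d - 1 ∧
        IsBallot (wWord ν T) ∧ (T (ν.colLen 0 - 1, 0)).map Prod.fst = some false} = ∅ := by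
      ext T; simp only [Set.mem_setOf_eq, Set.mem_empty_iff_false, iff_false]
      rintro ⟨h1, -, -, -, h5⟩; exact hnc T false h1 h5
    rw [e1, e2]
end

section
/- Let ≺ be the small bar order 1̄≺2̄≺⋯≺n̄≺1≺2≺⋯≺n on 𝒜ₙ, let λ and ν be partitions of n, and let 0 ≤ d ≤ n. Then the number of colored tableaux of shape ν with respect to ≺, with content λ and total color d, whose total reverse reading word is a ballot sequence, equals the number of triples (β, Q, P) in which β is a partition of d whose Young diagram is contained in that of ν, Q is a semistandard skew tableau of shape ν/β with entries in {1,…,n}, P is a semistandard tableau of shape β′ (the conjugate of β) with entries in {1,…,n}, the combined content of Q and P is λ (for each i, the total number of i's in Q and P is λᵢ), and the concatenation of the reverse row reading word of Q followed by the reverse row reading word of P is a ballot sequence. -/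
open scoped Classical

section Aux14

variable {n : ℕ}

lemma sbo_ff {a a' : Fin n} : smallBarOrd n (false, a) (false, a') ↔ a ≤ a' := by
  simp [smallBarOrd]

lemma sbo_tt {b b' : Fin n} : smallBarOrd n (true, b) (true, b') ↔ b ≤ b' := by
  simp [smallBarOrd]

lemma sbo_tf {b a : Fin n} : smallBarOrd n (true, b) (false, a) := Or.inl ⟨rfl, rfl⟩

lemma sbo_not_ft {a b : Fin n} : ¬ smallBarOrd n (false, a) (true, b) := by
  simp [smallBarOrd]

/-- The tableau assembled from a triple `(β, Q, P)`. -/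
def Fmap (bqp : YoungDiagram × (ℕ × ℕ → Option (Fin n)) × (ℕ × ℕ → Option (Fin n))) :
    Filling n := fun c =>
  match bqp.2.1 c with
  | some a => some (false, a)
  | none => (bqp.2.2 (c.2, c.1)).map fun b => (true, b)

/-- Structural conditions on a triple. -/
def Good (ν : YoungDiagram)
    (bqp : YoungDiagram × (ℕ × ℕ → Option (Fin n)) × (ℕ × ℕ → Option (Fin n))) : Prop :=
  bqp.1 ≤ ν ∧ IsSkewSSYT ν bqp.1 bqp.2.1 ∧ IsSkewSSYT bqp.1.transpose ⊥ bqp.2.2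

variable {ν : YoungDiagram}
variable {bqp : YoungDiagram × (ℕ × ℕ → Option (Fin n)) × (ℕ × ℕ → Option (Fin n))}

lemma Fmap_eq_false_iff {c : ℕ × ℕ} {a : Fin n} :
    Fmap bqp c = some (false, a) ↔ bqp.2.1 c = some a := by
  cases h : bqp.2.1 c with
  | some x => simp [Fmap, h]
  | none =>
    cases hp : bqp.2.2 (c.2, c.1) with
    | some b => simp [Fmap, h, hp]
    | none => simp [Fmap, h, hp]

lemma Fmap_eq_true_iff {c : ℕ × ℕ} {b : Fin n} :
    Fmap bqp c = some (true, b) ↔ bqp.2.1 c = none ∧ bqp.2.2 (c.2, c.1) = some b := by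
  cases h : bqp.2.1 c with
  | some x => simp [Fmap, h]
  | none =>
    cases hp : bqp.2.2 (c.2, c.1) with
    | some b' => simp [Fmap, h, hp]
    | none => simp [Fmap, h, hp]

lemma P_isSome_iff (hg : Good ν bqp) {c : ℕ × ℕ} :
    (bqp.2.2 c).isSome ↔ (c.2, c.1) ∈ bqp.1 := by
  rw [hg.2.2.1 c]
  constructor
  · rintro ⟨h1, -⟩
    rwa [YoungDiagram.mem_transpose] at h1
  · intro h
    exact ⟨YoungDiagram.mem_transpose.2 h, YoungDiagram.notMem_bot c⟩

lemma Q_isSome_iff (hg : Good ν bqp) {c : ℕ × ℕ} :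
    (bqp.2.1 c).isSome ↔ c ∈ ν ∧ c ∉ bqp.1 := hg.2.1.1 c

lemma Q_eq_none_of_mem (hg : Good ν bqp) {c : ℕ × ℕ} (hc : c ∈ bqp.1) :
    bqp.2.1 c = none := by
  rw [← Option.not_isSome_iff_eq_none, Q_isSome_iff hg]
  tauto

lemma Fmap_eq_true_iff' (hg : Good ν bqp) {c : ℕ × ℕ} {b : Fin n} :
    Fmap bqp c = some (true, b) ↔ bqp.2.2 (c.2, c.1) = some b := by
  rw [Fmap_eq_true_iff]
  constructor
  · exact fun h => h.2
  · intro h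
    refine ⟨Q_eq_none_of_mem hg ?_, h⟩
    have : (bqp.2.2 (c.2, c.1)).isSome := by rw [h]; rfl
    rw [P_isSome_iff hg] at this
    exact this

lemma Fmap_mem_beta_iff (hg : Good ν bqp) {c : ℕ × ℕ} :
    (∃ b, Fmap bqp c = some (true, b)) ↔ c ∈ bqp.1 := by
  constructor
  · rintro ⟨b, hb⟩
    rw [Fmap_eq_true_iff' hg] at hb
    have : (bqp.2.2 (c.2, c.1)).isSome := by rw [hb]; rfl
    rw [P_isSome_iff hg] at this
    exact this
  · intro hc
    have hP : (bqp.2.2 (c.2, c.1)).isSome := (P_isSome_iff hg).2 hc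
    obtain ⟨b, hb⟩ := Option.isSome_iff_exists.1 hP
    exact ⟨b, (Fmap_eq_true_iff' hg).2 hb⟩

lemma Fmap_isSome_iff (hg : Good ν bqp) {c : ℕ × ℕ} :
    (Fmap bqp c).isSome ↔ c ∈ ν := by
  constructor
  · intro h
    obtain ⟨⟨fl, v⟩, hv⟩ := Option.isSome_iff_exists.1 h
    cases fl with
    | false =>
      rw [Fmap_eq_false_iff] at hv
      have : (bqp.2.1 c).isSome := by rw [hv]; rfl
      exact ((Q_isSome_iff hg).1 this).1
    | true =>
      have := (Fmap_mem_beta_iff hg).1 ⟨v, hv⟩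
      exact hg.1 this
  · intro hc
    by_cases hβ : c ∈ bqp.1
    · obtain ⟨b, hb⟩ := (Fmap_mem_beta_iff hg).2 hβ
      rw [hb]; rfl
    · have hQ : (bqp.2.1 c).isSome := (Q_isSome_iff hg).2 ⟨hc, hβ⟩
      obtain ⟨a, ha⟩ := Option.isSome_iff_exists.1 hQ
      rw [(Fmap_eq_false_iff (a := a)).2 ha]; rfl

lemma Fmap_cases (hg : Good ν bqp) {c : ℕ × ℕ} (hc : c ∈ ν) :
    (c ∈ bqp.1 ∧ ∃ b, Fmap bqp c = some (true, b)) ∨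
    (c ∉ bqp.1 ∧ ∃ a, Fmap bqp c = some (false, a)) := by
  by_cases hβ : c ∈ bqp.1
  · exact Or.inl ⟨hβ, (Fmap_mem_beta_iff hg).2 hβ⟩
  · have hQ : (bqp.2.1 c).isSome := (Q_isSome_iff hg).2 ⟨hc, hβ⟩
    obtain ⟨a, ha⟩ := Option.isSome_iff_exists.1 hQ
    exact Or.inr ⟨hβ, a, Fmap_eq_false_iff.2 ha⟩

end Aux14
section Aux14b

variable {n : ℕ} {ν : YoungDiagram}
variable {bqp : YoungDiagram × (ℕ × ℕ → Option (Fin n)) × (ℕ × ℕ → Option (Fin n))}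

lemma Fmap_isColoredTableau (hg : Good ν bqp) :
    IsColoredTableau (smallBarOrd n) ν (Fmap bqp) := by
  obtain ⟨hβν, hQ, hP⟩ := id hg
  refine ⟨fun c => Fmap_isSome_iff hg, ?_, ?_, ?_, ?_⟩
  · -- rows weakly increasing
    rintro i j₁ j₂ ⟨fx, vx⟩ ⟨fy, vy⟩ hj hx hy
    cases fx with
    | true =>
      cases fy with
      | false => exact sbo_tf
      | true =>
        rw [Fmap_eq_true_iff' hg] at hx hy
        rcases Nat.lt_or_ge j₁ j₂ with h | h
        · exact sbo_tt.2 (le_of_lt (hP.2.2 j₁ j₂ i vx vy h hx hy))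
        · have : j₁ = j₂ := le_antisymm hj h
          subst this
          rw [hx] at hy
          exact sbo_tt.2 (le_of_eq (Option.some.inj hy))
    | false =>
      cases fy with
      | false =>
        rw [Fmap_eq_false_iff] at hx hy
        exact sbo_ff.2 (hQ.2.1 i j₁ j₂ vx vy hj hx hy)
      | true =>
        exfalso
        have hy' := (Fmap_mem_beta_iff hg).1 ⟨vy, hy⟩
        have hx' : (i, j₁) ∈ bqp.1 := bqp.1.up_left_mem le_rfl hj hy'
        rw [Fmap_eq_false_iff] at hx
        have := Q_eq_none_of_mem hg hx'
        rw [this] at hx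
        exact nomatch hx
  · -- columns weakly increasing
    rintro i₁ i₂ j ⟨fx, vx⟩ ⟨fy, vy⟩ hi hx hy
    cases fx with
    | true =>
      cases fy with
      | false => exact sbo_tf
      | true =>
        rw [Fmap_eq_true_iff' hg] at hx hy
        exact sbo_tt.2 (hP.2.1 j i₁ i₂ vx vy hi hx hy)
    | false =>
      cases fy with
      | false =>
        rw [Fmap_eq_false_iff] at hx hy
        rcases Nat.lt_or_ge i₁ i₂ with h | h
        · exact sbo_ff.2 (le_of_lt (hQ.2.2 i₁ i₂ j vx vy h hx hy))
        · have : i₁ = i₂ := le_antisymm hi h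
          subst this
          rw [hx] at hy
          exact sbo_ff.2 (le_of_eq (Option.some.inj hy))
      | true =>
        exfalso
        have hy' := (Fmap_mem_beta_iff hg).1 ⟨vy, hy⟩
        have hx' : (i₁, j) ∈ bqp.1 := bqp.1.up_left_mem hi le_rfl hy'
        rw [Fmap_eq_false_iff] at hx
        have := Q_eq_none_of_mem hg hx'
        rw [this] at hx
        exact nomatch hx
  · -- distinct unbarred in a column
    rintro i₁ i₂ j a hne hx hy
    rw [Fmap_eq_false_iff] at hx hy
    rcases Nat.lt_or_ge i₁ i₂ with h | h
    · exact absurd (hQ.2.2 i₁ i₂ j a a h hx hy) (lt_irrefl a)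
    · rcases Nat.lt_or_ge i₂ i₁ with h' | h'
      · exact absurd (hQ.2.2 i₂ i₁ j a a h' hy hx) (lt_irrefl a)
      · exact hne (le_antisymm h' h)
  · -- distinct barred in a row
    rintro i j₁ j₂ b hne hx hy
    rw [Fmap_eq_true_iff' hg] at hx hy
    rcases Nat.lt_or_ge j₁ j₂ with h | h
    · exact absurd (hP.2.2 j₁ j₂ i b b h hx hy) (lt_irrefl b)
    · rcases Nat.lt_or_ge j₂ j₁ with h' | h'
      · exact absurd (hP.2.2 j₂ j₁ i b b h' hy hx) (lt_irrefl b)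
      · exact hne (le_antisymm h' h)

end Aux14b
section Aux14c

variable {n : ℕ} {ν : YoungDiagram}
variable {bqp : YoungDiagram × (ℕ × ℕ → Option (Fin n)) × (ℕ × ℕ → Option (Fin n))}

lemma filterMap_reverse_range_eq {α : Type*} {m m' : ℕ} (h : m ≤ m') (f : ℕ → Option α)
    (hf : ∀ k, m ≤ k → f k = none) :
    (List.range m').reverse.filterMap f = (List.range m).reverse.filterMap f := by
  obtain ⟨t, rfl⟩ := Nat.exists_eq_add_of_le h
  rw [List.range_add, List.reverse_append, List.filterMap_append]
  have h0 : ((List.range t).map (m + ·)).reverse.filterMap f = [] := by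
    rw [List.filterMap_eq_nil_iff]
    intro a ha
    rw [List.mem_reverse, List.mem_map] at ha
    obtain ⟨k, -, rfl⟩ := ha
    exact hf _ (Nat.le_add_right m k)
  rw [h0, List.nil_append]

lemma flatMap_range_eq {α : Type*} {m m' : ℕ} (h : m ≤ m') (f : ℕ → List α)
    (hf : ∀ k, m ≤ k → f k = []) :
    (List.range m').flatMap f = (List.range m).flatMap f := by
  obtain ⟨t, rfl⟩ := Nat.exists_eq_add_of_le h
  rw [List.range_add, List.flatMap_append]
  have h0 : ((List.range t).map (m + ·)).flatMap f = [] := by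
    rw [List.flatMap_eq_nil_iff]
    intro a ha
    rw [List.mem_map] at ha
    obtain ⟨k, -, rfl⟩ := ha
    exact hf _ (Nat.le_add_right m k)
  rw [h0, List.append_nil]

lemma colLen_mono {μ : YoungDiagram} (h : μ ≤ ν) (j : ℕ) : μ.colLen j ≤ ν.colLen j := by
  by_contra hc
  push_neg at hc
  have : (ν.colLen j, j) ∈ μ := YoungDiagram.mem_iff_lt_colLen.2 hc
  exact lt_irrefl _ (YoungDiagram.mem_iff_lt_colLen.1 (h this))

lemma rowLen_mono {μ : YoungDiagram} (h : μ ≤ ν) (i : ℕ) : μ.rowLen i ≤ ν.rowLen i := by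
  by_contra hc
  push_neg at hc
  have : (i, ν.rowLen i) ∈ μ := YoungDiagram.mem_iff_lt_rowLen.2 hc
  exact lt_irrefl _ (YoungDiagram.mem_iff_lt_rowLen.1 (h this))

lemma uWord_Fmap (hg : Good ν bqp) : uWord ν (Fmap bqp) = revRowWord ν bqp.2.1 := by
  unfold uWord revRowWord
  apply List.flatMap_congr
  intro i _
  congr 1
  funext j
  cases h : bqp.2.1 (i, j) with
  | some a => rw [Fmap_eq_false_iff.2 h]
  | none =>
    have : ∀ x : Letter n, Fmap bqp (i, j) = some x → x.1 = true := by
      rintro ⟨fl, v⟩ hv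
      cases fl with
      | true => rfl
      | false =>
        rw [Fmap_eq_false_iff] at hv
        rw [h] at hv
        exact nomatch hv
    cases hF : Fmap bqp (i, j) with
    | none => rfl
    | some x =>
      obtain ⟨fl, v⟩ := x
      have := this _ hF
      subst this
      rfl

lemma vWord_Fmap (hg : Good ν bqp) :
    vWord ν (Fmap bqp) = revRowWord bqp.1.transpose bqp.2.2 := by
  have hβν : bqp.1 ≤ ν := hg.1
  have hgmatch : ∀ j i : ℕ,
      (match Fmap bqp (i, j) with
        | some (true, b) => some b
        | _ => none) = bqp.2.2 (j, i) := by
    intro j i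
    cases h : bqp.2.2 (j, i) with
    | some b =>
      have : Fmap bqp (i, j) = some (true, b) := (Fmap_eq_true_iff' hg).2 h
      rw [this]
    | none =>
      cases hF : Fmap bqp (i, j) with
      | none => rfl
      | some x =>
        obtain ⟨fl, v⟩ := x
        cases fl with
        | false => rfl
        | true =>
          rw [Fmap_eq_true_iff' hg] at hF
          rw [h] at hF
          exact nomatch hF
  unfold vWord revRowWord
  rw [YoungDiagram.colLen_transpose]
  have hP_none : ∀ j i : ℕ, (i, j) ∉ bqp.1 → bqp.2.2 (j, i) = none := by
    intro j i hij
    rw [← Option.not_isSome_iff_eq_none, P_isSome_iff hg]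
    exact hij
  have hrow : bqp.1.rowLen 0 ≤ ν.rowLen 0 := rowLen_mono hβν 0
  rw [flatMap_range_eq hrow]
  · apply List.flatMap_congr
    intro j hj
    rw [YoungDiagram.rowLen_transpose]
    have hcol : bqp.1.colLen j ≤ ν.colLen j := colLen_mono hβν j
    have hinner : ∀ m, (List.range m).reverse.filterMap
        (fun i => match Fmap bqp (i, j) with
          | some (true, b) => some b
          | _ => none) =
        (List.range m).reverse.filterMap (fun i => bqp.2.2 (j, i)) := by
      intro m
      congr 1
      funext i
      exact hgmatch j i
    rw [hinner, filterMap_reverse_range_eq hcol]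
    intro k hk
    apply hP_none
    rw [YoungDiagram.mem_iff_lt_colLen]
    omega
  · intro k hk
    rw [List.eq_nil_iff_forall_not_mem]
    intro b hb
    rw [List.mem_filterMap] at hb
    obtain ⟨i, -, hi⟩ := hb
    rw [hgmatch k i] at hi
    have : (i, k) ∈ bqp.1 := by
      rw [← P_isSome_iff hg (c := (k, i))]
      rw [hi]; rfl
    have : (0, k) ∈ bqp.1 := bqp.1.up_left_mem (Nat.zero_le i) le_rfl this
    rw [YoungDiagram.mem_iff_lt_rowLen] at this
    omega

lemma wWord_Fmap (hg : Good ν bqp) :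
    wWord ν (Fmap bqp) = revRowWord ν bqp.2.1 ++ revRowWord bqp.1.transpose bqp.2.2 := by
  rw [wWord, uWord_Fmap hg, vWord_Fmap hg]

end Aux14c
section Aux14d

variable {n : ℕ} {ν : YoungDiagram}
variable {bqp : YoungDiagram × (ℕ × ℕ → Option (Fin n)) × (ℕ × ℕ → Option (Fin n))}

lemma totalContent_Fmap (hg : Good ν bqp) (i : Fin n) :
    totalContent ν (Fmap bqp) i =
      (ν.cells.filter fun c => bqp.2.1 c = some i).card +
      ((bqp.1.transpose).cells.filter fun c => bqp.2.2 c = some i).card := by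
  unfold totalContent
  rw [Finset.filter_or, Finset.card_union_of_disjoint]
  · congr 1
    · congr 1
      apply Finset.filter_congr
      intro c _
      rw [Fmap_eq_false_iff]
    · apply Finset.card_bij (fun c _ => ((c.2 : ℕ), (c.1 : ℕ)))
      · rintro c hc
        rw [Finset.mem_filter] at hc ⊢
        obtain ⟨hcν, hcf⟩ := hc
        rw [Fmap_eq_true_iff' hg] at hcf
        refine ⟨?_, hcf⟩
        rw [YoungDiagram.mem_cells]
        have : (bqp.2.2 (c.2, c.1)).isSome := by rw [hcf]; rfl
        exact ((hg.2.2.1 (c.2, c.1)).1 this).1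
      · rintro ⟨a1, a2⟩ - ⟨b1, b2⟩ - h
        simp only [Prod.mk.injEq] at h ⊢
        exact ⟨h.2, h.1⟩
      · rintro d hd
        rw [Finset.mem_filter] at hd
        obtain ⟨hdβ, hdP⟩ := hd
        refine ⟨(d.2, d.1), ?_, rfl⟩
        rw [Finset.mem_filter, YoungDiagram.mem_cells]
        rw [YoungDiagram.mem_cells, YoungDiagram.mem_transpose] at hdβ
        constructor
        · exact hg.1 hdβ
        · rw [Fmap_eq_true_iff' hg]
          exact hdP
  · rw [Finset.disjoint_filter]
    rintro c - hcf hct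
    rw [hcf] at hct
    simp at hct

lemma totalColor_Fmap (hg : Good ν bqp) : totalColor ν (Fmap bqp) = bqp.1.card := by
  unfold totalColor
  have : ν.cells.filter (fun c => ((Fmap bqp c).map Prod.fst = some true)) = bqp.1.cells := by
    ext c
    rw [Finset.mem_filter, YoungDiagram.mem_cells, YoungDiagram.mem_cells]
    constructor
    · rintro ⟨hcν, hbar⟩
      rw [Option.map_eq_some_iff] at hbar
      obtain ⟨⟨fl, v⟩, hx, hfl⟩ := hbar
      cases fl with
      | false => exact absurd hfl (by simp)
      | true => exact (Fmap_mem_beta_iff hg).1 ⟨v, hx⟩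
    · intro hβ
      obtain ⟨b, hb⟩ := (Fmap_mem_beta_iff hg).2 hβ
      exact ⟨hg.1 hβ, by rw [hb]; rfl⟩
  rw [this]

end Aux14d
section Aux14e

variable {n : ℕ} {ν : YoungDiagram} {T : Filling n}

/-- The unbarred part of a colored tableau. -/
def QT (T : Filling n) : ℕ × ℕ → Option (Fin n) := fun c =>
  match T c with
  | some (false, a) => some a
  | _ => none

/-- The transposed barred part of a colored tableau. -/
def PT (T : Filling n) : ℕ × ℕ → Option (Fin n) := fun c =>
  match T (c.2, c.1) with
  | some (true, b) => some b
  | _ => none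

lemma QT_eq_some_iff {c : ℕ × ℕ} {a : Fin n} : QT T c = some a ↔ T c = some (false, a) := by
  unfold QT
  cases h : T c with
  | none => simp
  | some x =>
    obtain ⟨fl, v⟩ := x
    cases fl <;> simp

lemma PT_eq_some_iff {c : ℕ × ℕ} {b : Fin n} :
    PT T c = some b ↔ T (c.2, c.1) = some (true, b) := by
  unfold PT
  cases h : T (c.2, c.1) with
  | none => simp
  | some x =>
    obtain ⟨fl, v⟩ := x
    cases fl <;> simp

lemma sbo_fst_false {a : Fin n} {y : Letter n} (h : smallBarOrd n (false, a) y) :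
    y.1 = false := by
  rcases h with ⟨h1, -⟩ | ⟨h1, -⟩
  · exact absurd h1 (by simp)
  · exact h1.symm

lemma betaOf_isLowerSet (hT : IsColoredTableau (smallBarOrd n) ν T) :
    IsLowerSet (↑(ν.cells.filter fun c => (T c).map Prod.fst = some true) : Set (ℕ × ℕ)) := by
  intro a b hba ha
  simp only [Finset.coe_filter, Set.mem_setOf_eq, YoungDiagram.mem_cells] at ha ⊢
  obtain ⟨haν, habar⟩ := ha
  rw [Option.map_eq_some_iff] at habar
  obtain ⟨⟨fl, v⟩, hx, hfl⟩ := habar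
  cases fl with
  | false => exact absurd hfl (by simp)
  | true =>
  have hb1 : b.1 ≤ a.1 := hba.1
  have hb2 : b.2 ≤ a.2 := hba.2
  have hbν : (b.1, b.2) ∈ ν := ν.up_left_mem hb1 hb2 (by rwa [Prod.mk.eta])
  refine ⟨by rwa [Prod.mk.eta] at hbν, ?_⟩
  have hbsome : (T b).isSome := (hT.1 b).2 (by rwa [Prod.mk.eta] at hbν)
  obtain ⟨⟨flb, vb⟩, hxb⟩ := Option.isSome_iff_exists.1 hbsome
  cases flb with
  | true => rw [hxb]; rfl
  | false =>
    exfalso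
    have hmidν : (b.1, a.2) ∈ ν := ν.up_left_mem hb1 le_rfl (by rwa [Prod.mk.eta])
    have hmidsome : (T (b.1, a.2)).isSome := (hT.1 _).2 hmidν
    obtain ⟨y, hy⟩ := Option.isSome_iff_exists.1 hmidsome
    have hrow : smallBarOrd n (false, vb) y :=
      hT.2.1 b.1 b.2 a.2 (false, vb) y hb2 (by rwa [Prod.mk.eta]) hy
    have hcol : smallBarOrd n y (true, v) :=
      hT.2.2.1 b.1 a.1 a.2 y (true, v) hb1 hy (by rwa [Prod.mk.eta])
    have hyf : y.1 = false := sbo_fst_false hrow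
    obtain ⟨fy, vy⟩ := y
    subst hyf
    exact sbo_not_ft hcol

/-- The shape of the barred part of a colored tableau. -/
def betaOf (ν : YoungDiagram) (T : Filling n)
    (hT : IsColoredTableau (smallBarOrd n) ν T) : YoungDiagram :=
  ⟨ν.cells.filter fun c => (T c).map Prod.fst = some true, betaOf_isLowerSet hT⟩

lemma mem_betaOf {hT : IsColoredTableau (smallBarOrd n) ν T} {c : ℕ × ℕ} :
    c ∈ betaOf ν T hT ↔ c ∈ ν ∧ (T c).map Prod.fst = some true := by
  rw [← YoungDiagram.mem_cells]
  show c ∈ Finset.filter _ _ ↔ _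
  rw [Finset.mem_filter, YoungDiagram.mem_cells]

lemma mem_betaOf_iff_true {hT : IsColoredTableau (smallBarOrd n) ν T} {c : ℕ × ℕ} :
    c ∈ betaOf ν T hT ↔ ∃ b, T c = some (true, b) := by
  rw [mem_betaOf]
  constructor
  · rintro ⟨hcν, hbar⟩
    rw [Option.map_eq_some_iff] at hbar
    obtain ⟨⟨fl, v⟩, hx, hfl⟩ := hbar
    cases fl with
    | false => exact absurd hfl (by simp)
    | true => exact ⟨v, hx⟩
  · rintro ⟨b, hb⟩
    have : (T c).isSome := by rw [hb]; rfl
    exact ⟨(hT.1 c).1 this, by rw [hb]; rfl⟩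

lemma good_of_tableau (hT : IsColoredTableau (smallBarOrd n) ν T) :
    Good ν (betaOf ν T hT, QT T, PT T) := by
  refine ⟨?_, ⟨?_, ?_, ?_⟩, ⟨?_, ?_, ?_⟩⟩
  · intro c hc
    exact (Finset.mem_filter.1 hc).1
  · -- QT isSome
    intro c
    constructor
    · intro h
      obtain ⟨a, ha⟩ := Option.isSome_iff_exists.1 h
      rw [QT_eq_some_iff] at ha
      have hsome : (T c).isSome := by rw [ha]; rfl
      refine ⟨(hT.1 c).1 hsome, ?_⟩
      rw [mem_betaOf_iff_true (hT := hT)]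
      rintro ⟨b, hb⟩
      rw [ha] at hb
      simp at hb
    · rintro ⟨hcν, hcβ⟩
      have hsome : (T c).isSome := (hT.1 c).2 hcν
      obtain ⟨⟨fl, v⟩, hx⟩ := Option.isSome_iff_exists.1 hsome
      cases fl with
      | true =>
        exact absurd ((mem_betaOf_iff_true (hT := hT)).2 ⟨v, hx⟩) hcβ
      | false =>
        show (QT T c).isSome = true
        rw [(QT_eq_some_iff (a := v)).2 hx]; rfl
  · -- QT rows
    intro i j₁ j₂ x y hj hx hy
    rw [QT_eq_some_iff] at hx hy
    exact sbo_ff.1 (hT.2.1 i j₁ j₂ (false, x) (false, y) hj hx hy)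
  · -- QT cols strict
    intro i₁ i₂ j x y hi hx hy
    rw [QT_eq_some_iff] at hx hy
    have hle : x ≤ y := sbo_ff.1 (hT.2.2.1 i₁ i₂ j _ _ (le_of_lt hi) hx hy)
    refine lt_of_le_of_ne hle ?_
    rintro rfl
    exact hT.2.2.2.1 i₁ i₂ j x (Nat.ne_of_lt hi) hx hy
  · -- PT isSome
    intro c
    constructor
    · intro h
      obtain ⟨b, hb⟩ := Option.isSome_iff_exists.1 h
      rw [PT_eq_some_iff] at hb
      refine ⟨?_, YoungDiagram.notMem_bot c⟩
      rw [YoungDiagram.mem_transpose, mem_betaOf_iff_true (hT := hT)]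
      exact ⟨b, hb⟩
    · rintro ⟨hcβ, -⟩
      rw [YoungDiagram.mem_transpose, mem_betaOf_iff_true (hT := hT)] at hcβ
      obtain ⟨b, hb⟩ := hcβ
      show (PT T c).isSome = true
      rw [(PT_eq_some_iff (b := b)).2 hb]; rfl
  · -- PT rows
    intro i j₁ j₂ x y hj hx hy
    rw [PT_eq_some_iff] at hx hy
    exact sbo_tt.1 (hT.2.2.1 j₁ j₂ i (true, x) (true, y) hj hx hy)
  · -- PT cols strict
    intro i₁ i₂ j x y hi hx hy
    rw [PT_eq_some_iff] at hx hy
    have hle : x ≤ y := sbo_tt.1 (hT.2.1 j i₁ i₂ (true, x) (true, y) (le_of_lt hi) hx hy)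
    refine lt_of_le_of_ne hle ?_
    rintro rfl
    exact hT.2.2.2.2 j i₁ i₂ x (Nat.ne_of_lt hi) hx hy

lemma Fmap_recover (hT : IsColoredTableau (smallBarOrd n) ν T) :
    Fmap (betaOf ν T hT, QT T, PT T) = T := by
  funext c
  show (match QT T c with
    | some a => some ((false : Bool), a)
    | none => (PT T (c.2, c.1)).map fun b => ((true : Bool), b)) = T c
  cases h : T c with
  | none =>
    have h1 : QT T c = none := by unfold QT; rw [h]
    have h2 : PT T (c.2, c.1) = none := by
      unfold PT
      show (match T (c.1, c.2) with
        | some (true, b) => some b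
        | _ => none) = none
      rw [Prod.mk.eta, h]
    rw [h1, h2]
    rfl
  | some x =>
    obtain ⟨fl, v⟩ := x
    cases fl with
    | false =>
      rw [QT_eq_some_iff.2 h]
    | true =>
      have h1 : QT T c = none := by unfold QT; rw [h]
      have h2 : PT T (c.2, c.1) = some v := by
        rw [PT_eq_some_iff]
        show T (c.1, c.2) = _
        rw [Prod.mk.eta, h]
      rw [h1, h2]
      rfl

end Aux14e
section Aux14f

variable {n : ℕ} {ν : YoungDiagram}

lemma Fmap_injOn :
    Set.InjOn (Fmap (n := n))
      {bqp : YoungDiagram × (ℕ × ℕ → Option (Fin n)) × (ℕ × ℕ → Option (Fin n)) |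
        Good ν bqp} := by
  rintro ⟨β, Q, P⟩ hx ⟨β', Q', P'⟩ hy h
  simp only [Set.mem_setOf_eq] at hx hy
  have hQ : Q = Q' := by
    funext c
    cases hq : Q c with
    | some a =>
      have h1 : Fmap (β, Q, P) c = some (false, a) := Fmap_eq_false_iff.2 hq
      rw [h] at h1
      have h2 : Q' c = some a := Fmap_eq_false_iff.1 h1
      exact h2.symm
    | none =>
      cases hq' : Q' c with
      | some a =>
        have h1 : Fmap (β', Q', P') c = some (false, a) := Fmap_eq_false_iff.2 hq'
        rw [← h] at h1
        have h2 : Q c = some a := Fmap_eq_false_iff.1 h1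
        rw [hq] at h2
        exact nomatch h2
      | none => rfl
  have hP : P = P' := by
    funext c
    obtain ⟨c1, c2⟩ := c
    cases hp : P (c1, c2) with
    | some b =>
      have h1 : Fmap (β, Q, P) (c2, c1) = some (true, b) := by
        rw [Fmap_eq_true_iff' hx]
        exact hp
      rw [h] at h1
      have h2 : P' (c1, c2) = some b := (Fmap_eq_true_iff' hy).1 h1
      exact h2.symm
    | none =>
      cases hp' : P' (c1, c2) with
      | some b =>
        have h1 : Fmap (β', Q', P') (c2, c1) = some (true, b) := by
          rw [Fmap_eq_true_iff' hy]
          exact hp'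
        rw [← h] at h1
        have h2 : P (c1, c2) = some b := (Fmap_eq_true_iff' hx).1 h1
        rw [hp] at h2
        exact nomatch h2
      | none => rfl
  have hβ : β = β' := by
    ext c
    constructor
    · intro hc
      have := (Fmap_mem_beta_iff (bqp := (β, Q, P)) hx).2 hc
      rw [h] at this
      exact (Fmap_mem_beta_iff (bqp := (β', Q', P')) hy).1 this
    · intro hc
      have := (Fmap_mem_beta_iff (bqp := (β', Q', P')) hy).2 hc
      rw [← h] at this
      exact (Fmap_mem_beta_iff (bqp := (β, Q, P)) hx).1 this
  rw [hβ, hQ, hP]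

end Aux14f
/-- For the small bar order, the number of colored tableaux of shape `ν`,
content `λ` and total color `d` whose total reverse reading word is a ballot sequence equals
the number of triples `(β, Q, P)` with `β ⊢ d`, `β ⊆ ν`, `Q` a semistandard skew tableau of
shape `ν/β`, `P` a semistandard tableau of shape `β′`, combined content `λ`, and the
concatenation of the reverse reading words of `Q` and `P` a ballot sequence. -/
theorem count_colored_yamanouchi_eq_count_triples {n d : ℕ} (hd : d ≤ n)
    (lam : Fin n → ℕ) (hlam : Antitone lam) (hsum : ∑ i, lam i = n)
    (ν : YoungDiagram) (hν : ν.card = n) :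
    {T : Filling n | IsColoredTableau (smallBarOrd n) ν T ∧
      (∀ i, totalContent ν T i = lam i) ∧ totalColor ν T = d ∧
      IsBallot (wWord ν T)}.ncard =
    {bqp : YoungDiagram × (ℕ × ℕ → Option (Fin n)) × (ℕ × ℕ → Option (Fin n)) |
      bqp.1.card = d ∧ bqp.1 ≤ ν ∧
      IsSkewSSYT ν bqp.1 bqp.2.1 ∧
      IsSkewSSYT bqp.1.transpose ⊥ bqp.2.2 ∧
      (∀ i : Fin n,
        (ν.cells.filter fun c => bqp.2.1 c = some i).card +
          ((bqp.1.transpose).cells.filter fun c => bqp.2.2 c = some i).card = lam i) ∧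
      IsBallot (revRowWord ν bqp.2.1 ++ revRowWord bqp.1.transpose bqp.2.2)}.ncard := by
  have key : {T : Filling n | IsColoredTableau (smallBarOrd n) ν T ∧
      (∀ i, totalContent ν T i = lam i) ∧ totalColor ν T = d ∧
      IsBallot (wWord ν T)} =
      Fmap '' {bqp : YoungDiagram × (ℕ × ℕ → Option (Fin n)) × (ℕ × ℕ → Option (Fin n)) |
        bqp.1.card = d ∧ bqp.1 ≤ ν ∧
        IsSkewSSYT ν bqp.1 bqp.2.1 ∧
        IsSkewSSYT bqp.1.transpose ⊥ bqp.2.2 ∧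
        (∀ i : Fin n,
          (ν.cells.filter fun c => bqp.2.1 c = some i).card +
            ((bqp.1.transpose).cells.filter fun c => bqp.2.2 c = some i).card = lam i) ∧
        IsBallot (revRowWord ν bqp.2.1 ++ revRowWord bqp.1.transpose bqp.2.2)} := by
    ext T
    simp only [Set.mem_setOf_eq, Set.mem_image]
    constructor
    · rintro ⟨hT, hcont, hcol, hball⟩
      refine ⟨(betaOf ν T hT, QT T, PT T), ?_, Fmap_recover hT⟩
      have hg := good_of_tableau hT
      have hrec := Fmap_recover hT
      refine ⟨?_, hg.1, hg.2.1, hg.2.2, ?_, ?_⟩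
      · have h1 := totalColor_Fmap hg
        rw [hrec] at h1
        exact h1.symm.trans hcol
      · intro i
        have h1 := totalContent_Fmap hg i
        rw [hrec] at h1
        exact h1.symm.trans (hcont i)
      · have h1 := wWord_Fmap hg
        rw [hrec] at h1
        rw [← h1]
        exact hball
    · rintro ⟨bqp, ⟨hcard, hle, hQ, hP, hcont, hball⟩, rfl⟩
      have hg : Good ν bqp := ⟨hle, hQ, hP⟩
      exact ⟨Fmap_isColoredTableau hg,
        fun i => by rw [totalContent_Fmap hg]; exact hcont i,
        by rw [totalColor_Fmap hg]; exact hcard,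
        by rw [wWord_Fmap hg]; exact hball⟩
  rw [key]
  apply Set.ncard_image_of_injOn
  exact Set.InjOn.mono
    (fun bqp hb => show Good ν bqp from ⟨hb.2.1, hb.2.2.1, hb.2.2.2.1⟩)
    (Fmap_injOn (ν := ν))
end
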